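/- arXiv:2209.14753 — 5 statements merged into one kernel-verified Lean document; each statement's English description precedes it below -/
import Mathlib

section
/- Let G be a profinite group, p a prime and P a p-Sylow subgroup of G. Let N₀ be an open normal subgroup of G and u ∈ P. Suppose that for each coset Nt with N an open normal subgroup of G, t ∈ P and Nt ⊆ N₀u, one has (a) Nt ∩ P is not contained in the conjugacy class t^G, and (b) Nt ∩ P does not have finite exponent. Then G has at least 2^ℵ₀ conjugacy classes of p^∞-elements. -/
open scoped Pointwise

universe u

/-- A topological group is pro-`p` if every open normal subgroup has `p`-power index,
i.e. all finite continuous quotients are `p`-groups. -/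
def IsProPGroup (p : ℕ) (H : Type*) [Group H] [TopologicalSpace H] : Prop :=
  ∀ U : Subgroup H, U.Normal → IsOpen (U : Set H) → ∃ n : ℕ, U.index = p ^ n

/-- A topological group is pro-`p'` if every open normal subgroup has index coprime to `p`,
i.e. all finite continuous quotients have order coprime to `p`. -/
def IsProPPrimeGroup (p : ℕ) (H : Type*) [Group H] [TopologicalSpace H] : Prop :=
  ∀ U : Subgroup H, U.Normal → IsOpen (U : Set H) → Nat.Coprime p U.index

/-- A `p`-element of a topological group: the closed subgroup it topologically generates
is a pro-`p` group (equivalently, a finite `p`-group or a copy of `ℤ_p`). -/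
def IsPElement (p : ℕ) {G : Type*} [Group G] [TopologicalSpace G] [IsTopologicalGroup G]
    (x : G) : Prop :=
  IsProPGroup p (Subgroup.zpowers x).topologicalClosure

/-- A `p^∞`-element: a `p`-element of infinite order. -/
def IsPInftyElement (p : ℕ) {G : Type*} [Group G] [TopologicalSpace G] [IsTopologicalGroup G]
    (x : G) : Prop :=
  IsPElement p x ∧ ¬ IsOfFinOrder x

/-- A `p`-Sylow subgroup of a profinite group: a maximal closed subgroup consisting of
`p`-elements. -/
def IsSylowProP (p : ℕ) {G : Type*} [Group G] [TopologicalSpace G] [IsTopologicalGroup G]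
    (P : Subgroup G) : Prop :=
  IsClosed (P : Set G) ∧ (∀ x ∈ P, IsPElement p x) ∧
    ∀ Q : Subgroup G, IsClosed (Q : Set G) → (∀ x ∈ Q, IsPElement p x) → P ≤ Q → Q = P

/-- A subset of a group has finite exponent if the orders of its elements are finite
and bounded. -/
def HasFinExponent {G : Type*} [Monoid G] (S : Set G) : Prop :=
  ∃ n : ℕ, 0 < n ∧ ∀ x ∈ S, x ^ n = 1

set_option linter.unusedSectionVars false
set_option maxHeartbeats 1000000

namespace Prop21

variable {G : Type u} [Group G] [TopologicalSpace G] [IsTopologicalGroup G]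

lemma mem_coset_iff (N : Subgroup G) (t x : G) :
    x ∈ (N : Set G) * {t} ↔ x * t⁻¹ ∈ N := by
  rw [Set.mul_singleton, Set.mem_image]
  constructor
  · rintro ⟨a, ha, rfl⟩; simpa using ha
  · intro hx; exact ⟨x * t⁻¹, hx, by group⟩

lemma self_mem_coset (N : Subgroup G) (t : G) : t ∈ (N : Set G) * {t} := by
  rw [mem_coset_iff]; simpa using N.one_mem

lemma coset_subset {M N : Subgroup G} {z t : G} (hMN : M ≤ N)
    (hz : z ∈ (N : Set G) * {t}) : (M : Set G) * {z} ⊆ (N : Set G) * {t} := by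
  intro x hx
  rw [mem_coset_iff] at hx hz ⊢
  have : x * t⁻¹ = (x * z⁻¹) * (z * t⁻¹) := by group
  rw [this]
  exact N.mul_mem (hMN hx) hz

lemma coset_isClosed (N : Subgroup G) (hN : IsOpen (N : Set G)) (t : G) :
    IsClosed ((N : Set G) * {t}) := by
  have : (N : Set G) * {t} = (fun x => x * t⁻¹) ⁻¹' (N : Set G) := by
    ext x; simp [mem_coset_iff]
  rw [this]
  exact (N.isClosed_of_isOpen hN).preimage (continuous_mul_right t⁻¹)

lemma inf_normal {M N : Subgroup G} (hM : M.Normal) (hN : N.Normal) : (M ⊓ N).Normal :=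
  ⟨fun n hn g => by
    rw [Subgroup.mem_inf] at hn ⊢
    exact ⟨hM.conj_mem n hn.1 g, hN.conj_mem n hn.2 g⟩⟩

variable [CompactSpace G] [T2Space G] [TotallyDisconnectedSpace G]

lemma exists_openNormal_subset {U : Set G} (hU : IsOpen U) (h1 : (1 : G) ∈ U) :
    ∃ M : Subgroup G, M.Normal ∧ IsOpen (M : Set G) ∧ (M : Set G) ⊆ U := by
  obtain ⟨V, hV, h1V, hVU⟩ := compact_exists_isClopen_in_isOpen hU h1
  obtain ⟨H, hH⟩ := IsTopologicalGroup.exist_openNormalSubgroup_sub_clopen_nhds_of_one hV h1V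
  exact ⟨H.toSubgroup, H.isNormal', H.toOpenSubgroup.isOpen', fun x hx => hVU (hH hx)⟩

/-- A "good coset" datum: an open normal subgroup `N` and `t ∈ P` with `Nt ⊆ N₀u`. -/
structure Node (G : Type u) [Group G] [TopologicalSpace G] (P N₀ : Subgroup G) (u : G) where
  N : Subgroup G
  norm : N.Normal
  opn : IsOpen (N : Set G)
  t : G
  tP : t ∈ P
  sub : (N : Set G) * {t} ⊆ (N₀ : Set G) * {u}

variable {P N₀ : Subgroup G} {u : G}

def Node.set (c : Node G P N₀ u) : Set G := (c.N : Set G) * {c.t}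

/-- The standing hypothesis of Proposition 2.1. -/
def Hyp (G : Type u) [Group G] [TopologicalSpace G] (P N₀ : Subgroup G) (u : G) : Prop :=
  ∀ N : Subgroup G, N.Normal → IsOpen (N : Set G) → ∀ t ∈ P,
      (N : Set G) * {t} ⊆ (N₀ : Set G) * {u} →
        ¬ ((N : Set G) * {t} ∩ P ⊆ {y | IsConj t y}) ∧
        ¬ HasFinExponent ((N : Set G) * {t} ∩ P)

/-- Shrink a good coset to one whose representative has order `> m` modulo the subgroup. -/
lemma shrink (h : Hyp G P N₀ u) (d : Node G P N₀ u) (m : ℕ) (hm : 0 < m) :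
    ∃ d' : Node G P N₀ u, d'.set ⊆ d.set ∧ d'.t ^ m ∉ d'.N := by
  obtain ⟨-, hb⟩ := h d.N d.norm d.opn d.t d.tP d.sub
  have hex : ∃ a ∈ d.set ∩ (P : Set G), a ^ m ≠ 1 := by
    by_contra hc
    push_neg at hc
    exact hb ⟨m, hm, hc⟩
  obtain ⟨a, ⟨haset, haP⟩, ham⟩ := hex
  have h1 : (1 : G) ∈ ({a ^ m}ᶜ : Set G) := by simpa using (Ne.symm ham)
  obtain ⟨M, hMnorm, hMopen, hMsub⟩ :=
    exists_openNormal_subset (isClosed_singleton (x := a ^ m)).isOpen_compl h1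
  refine ⟨⟨M ⊓ d.N, inf_normal hMnorm d.norm, by rw [Subgroup.coe_inf]; exact hMopen.inter d.opn,
      a, haP, (coset_subset inf_le_right haset).trans d.sub⟩,
    coset_subset inf_le_right haset, ?_⟩
  intro hmem
  exact hMsub (Subgroup.mem_inf.mp hmem).1 rfl

/-- The splitting step: inside a good coset find two good sub-cosets whose elements are
pairwise non-conjugate, with representatives of large order modulo the subgroups. -/
lemma step (h : Hyp G P N₀ u) (c : Node G P N₀ u) (m : ℕ) (hm : 0 < m) :
    ∃ c₀ c₁ : Node G P N₀ u, c₀.set ⊆ c.set ∧ c₁.set ⊆ c.set ∧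
      c₀.t ^ m ∉ c₀.N ∧ c₁.t ^ m ∉ c₁.N ∧
      ∀ x ∈ c₀.set, ∀ y ∈ c₁.set, ¬ IsConj x y := by
  obtain ⟨ha, -⟩ := h c.N c.norm c.opn c.t c.tP c.sub
  obtain ⟨z, hz, hznc⟩ := Set.not_subset.mp ha
  have hznc' : ¬ IsConj c.t z := hznc
  obtain ⟨hzset, hzP⟩ := hz
  set K : Set G := (fun g => z * g * c.t⁻¹ * g⁻¹) '' Set.univ with hK
  have hKcomp : IsCompact K := isCompact_univ.image (by continuity)
  have h1K : (1 : G) ∈ Kᶜ := by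
    rintro ⟨g, -, hg⟩
    simp only at hg
    apply hznc'
    rw [isConj_iff]
    refine ⟨g, ?_⟩
    calc g * c.t * g⁻¹ = (z * g * c.t⁻¹ * g⁻¹)⁻¹ * z := by group
      _ = z := by rw [hg]; group
  obtain ⟨M₁, hM₁n, hM₁o, hM₁sub⟩ :=
    exists_openNormal_subset hKcomp.isClosed.isOpen_compl h1K
  set M : Subgroup G := M₁ ⊓ c.N with hMdef
  have hMnorm : M.Normal := inf_normal hM₁n c.norm
  have hMopen : IsOpen (M : Set G) := by rw [hMdef, Subgroup.coe_inf]; exact hM₁o.inter c.opn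
  have hsub₀ : (M : Set G) * {c.t} ⊆ c.set := coset_subset inf_le_right (self_mem_coset c.N c.t)
  have hsub₁ : (M : Set G) * {z} ⊆ c.set := coset_subset inf_le_right hzset
  have sep : ∀ x ∈ (M : Set G) * {c.t}, ∀ y ∈ (M : Set G) * {z}, ¬ IsConj x y := by
    intro x hx y hy hconj
    rw [mem_coset_iff] at hx hy
    obtain ⟨g, hg⟩ := isConj_iff.mp hconj
    have hxM : x * c.t⁻¹ ∈ M₁ := (Subgroup.mem_inf.mp hx).1
    have hyM : y * z⁻¹ ∈ M₁ := (Subgroup.mem_inf.mp hy).1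
    have h2 : g * (x * c.t⁻¹) * g⁻¹ ∈ M₁ := hM₁n.conj_mem _ hxM g
    have key : z * g * c.t⁻¹ * g⁻¹ = (y * z⁻¹)⁻¹ * (g * (x * c.t⁻¹) * g⁻¹) := by
      rw [← hg]; group
    have hw : z * g * c.t⁻¹ * g⁻¹ ∈ M₁ := by
      rw [key]; exact M₁.mul_mem (M₁.inv_mem hyM) h2
    exact hM₁sub hw ⟨g, Set.mem_univ g, rfl⟩
  set d₀ : Node G P N₀ u := ⟨M, hMnorm, hMopen, c.t, c.tP, hsub₀.trans c.sub⟩ with hd₀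
  set d₁ : Node G P N₀ u := ⟨M, hMnorm, hMopen, z, hzP, hsub₁.trans c.sub⟩ with hd₁
  obtain ⟨c₀, hc₀sub, hc₀m⟩ := shrink h d₀ m hm
  obtain ⟨c₁, hc₁sub, hc₁m⟩ := shrink h d₁ m hm
  refine ⟨c₀, c₁, hc₀sub.trans hsub₀, hc₁sub.trans hsub₁, hc₀m, hc₁m, ?_⟩
  intro x hx y hy
  exact sep x (hc₀sub hx) y (hc₁sub hy)

variable (h : Hyp G P N₀ u) (hN₀norm : N₀.Normal) (hN₀open : IsOpen (N₀ : Set G)) (hu : u ∈ P)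

/-- The binary tree of good cosets; the head of the list is the most recent branching. -/
noncomputable def node : List Bool → Node G P N₀ u
  | [] => ⟨N₀, hN₀norm, hN₀open, u, hu, subset_rfl⟩
  | b :: s =>
    let e := step h (node s) (s.length + 1).factorial (Nat.factorial_pos _)
    if b then e.choose_spec.choose else e.choose

lemma node_spec (s : List Bool) :
    (node h hN₀norm hN₀open hu (false :: s)).set ⊆ (node h hN₀norm hN₀open hu s).set ∧
    (node h hN₀norm hN₀open hu (true :: s)).set ⊆ (node h hN₀norm hN₀open hu s).set ∧
    (node h hN₀norm hN₀open hu (false :: s)).t ^ (s.length + 1).factorial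
      ∉ (node h hN₀norm hN₀open hu (false :: s)).N ∧
    (node h hN₀norm hN₀open hu (true :: s)).t ^ (s.length + 1).factorial
      ∉ (node h hN₀norm hN₀open hu (true :: s)).N ∧
    ∀ x ∈ (node h hN₀norm hN₀open hu (false :: s)).set,
      ∀ y ∈ (node h hN₀norm hN₀open hu (true :: s)).set, ¬ IsConj x y := by
  have hf : node h hN₀norm hN₀open hu (false :: s) =
      (step h (node h hN₀norm hN₀open hu s) (s.length + 1).factorial
        (Nat.factorial_pos _)).choose := by
    simp [node]
  have ht : node h hN₀norm hN₀open hu (true :: s) =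
      (step h (node h hN₀norm hN₀open hu s) (s.length + 1).factorial
        (Nat.factorial_pos _)).choose_spec.choose := by
    simp [node]
  rw [hf, ht]
  exact (step h (node h hN₀norm hN₀open hu s) (s.length + 1).factorial
    (Nat.factorial_pos _)).choose_spec.choose_spec

/-- The branch of the tree determined by `α`, read up to level `n`. -/
def chain (α : ℕ → Bool) : ℕ → List Bool
  | 0 => []
  | n + 1 => α n :: chain α n

lemma chain_length (α : ℕ → Bool) (n : ℕ) : (chain α n).length = n := by
  induction n with
  | zero => rfl
  | succ n ih => simp [chain, ih]

lemma chain_eq (α β : ℕ → Bool) : ∀ m, (∀ k < m, α k = β k) → chain α m = chain β m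
  | 0, _ => rfl
  | m + 1, hm => by
    rw [chain, chain, hm m (Nat.lt_succ_self m),
      chain_eq α β m (fun k hk => hm k (hk.trans (Nat.lt_succ_self m)))]

end Prop21

/-- **Proposition 2.1.** Let `G` be a profinite group, `p` a prime and `P` a `p`-Sylow
subgroup of `G`. Let `N₀` be an open normal subgroup of `G` and `u ∈ P`. Suppose that for
each coset `Nt` with `N` an open normal subgroup of `G`, `t ∈ P` and `Nt ⊆ N₀u`, one has
(a) `Nt ∩ P ⊄ t^G` and (b) `Nt ∩ P` does not have finite exponent. Then `G` has at
least `2^ℵ₀` conjugacy classes of `p^∞`-elements. -/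
theorem continuum_le_conjClasses_pInfty
    {G : Type u} [Group G] [TopologicalSpace G] [IsTopologicalGroup G]
    [CompactSpace G] [T2Space G] [TotallyDisconnectedSpace G]
    (p : ℕ) (hp : p.Prime) (P : Subgroup G) (hP : IsSylowProP p P)
    (N₀ : Subgroup G) (hN₀norm : N₀.Normal) (hN₀open : IsOpen (N₀ : Set G))
    (u : G) (hu : u ∈ P)
    (h : ∀ N : Subgroup G, N.Normal → IsOpen (N : Set G) → ∀ t ∈ P,
      (N : Set G) * {t} ⊆ (N₀ : Set G) * {u} →
        ¬ ((N : Set G) * {t} ∩ P ⊆ {y | IsConj t y}) ∧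
        ¬ HasFinExponent ((N : Set G) * {t} ∩ P)) :
    Cardinal.continuum ≤
      Cardinal.mk {c : ConjClasses G | ∃ x ∈ c.carrier, IsPInftyElement p x} := by
  classical
  have hh : Prop21.Hyp G P N₀ u := h
  set nd : List Bool → Prop21.Node G P N₀ u := Prop21.node hh hN₀norm hN₀open hu with hnd
  have spec := Prop21.node_spec hh hN₀norm hN₀open hu
  -- limit points along branches
  have hKlim : ∀ α : ℕ → Bool, ∃ x : G,
      ∀ n, x ∈ (nd (Prop21.chain α n)).set ∩ (P : Set G) := by
    intro α
    have hsub : ∀ n, (nd (Prop21.chain α (n + 1))).set ∩ (P : Set G) ⊆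
        (nd (Prop21.chain α n)).set ∩ (P : Set G) := by
      intro n
      apply Set.inter_subset_inter_left
      have hc : Prop21.chain α (n + 1) = α n :: Prop21.chain α n := rfl
      rw [hc]
      cases hα : α n
      · exact (spec _).1
      · exact (spec _).2.1
    have hne : ∀ n, ((nd (Prop21.chain α n)).set ∩ (P : Set G)).Nonempty :=
      fun n => ⟨(nd _).t, Prop21.self_mem_coset _ _, (nd _).tP⟩
    have hcl : ∀ n, IsClosed ((nd (Prop21.chain α n)).set ∩ (P : Set G)) :=
      fun n => (Prop21.coset_isClosed _ (nd _).opn _).inter hP.1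
    have hlim := IsCompact.nonempty_iInter_of_sequence_nonempty_isCompact_isClosed _
      hsub hne ((hcl 0).isCompact) hcl
    obtain ⟨x, hx⟩ := hlim
    exact ⟨x, fun n => Set.mem_iInter.mp hx n⟩
  choose x hx using hKlim
  -- the order invariant at each level
  have hexp : ∀ (α : ℕ → Bool) (n : ℕ),
      (nd (Prop21.chain α (n + 1))).t ^ (n + 1).factorial ∉ (nd (Prop21.chain α (n + 1))).N := by
    intro α n
    have hlen := Prop21.chain_length α n
    have hc : Prop21.chain α (n + 1) = α n :: Prop21.chain α n := rfl
    cases hα : α n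
    · have hs := (spec (Prop21.chain α n)).2.2.1
      rw [hlen] at hs
      rw [hc, hα]
      exact hs
    · have hs := (spec (Prop21.chain α n)).2.2.2.1
      rw [hlen] at hs
      rw [hc, hα]
      exact hs
  -- limit elements have infinite order
  have hford : ∀ α : ℕ → Bool, ¬ IsOfFinOrder (x α) := by
    intro α hfo
    obtain ⟨n, hn, hxn⟩ := isOfFinOrder_iff_pow_eq_one.mp hfo
    obtain ⟨k, hk⟩ := Nat.dvd_factorial hn le_rfl
    have hfac : x α ^ n.factorial = 1 := by rw [hk, pow_mul, hxn, one_pow]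
    obtain ⟨m, rfl⟩ := Nat.exists_eq_succ_of_ne_zero hn.ne'
    set c := nd (Prop21.chain α (m + 1)) with hc
    have hts : c.t ^ (m + 1).factorial ∉ c.N := hexp α m
    apply hts
    haveI : c.N.Normal := c.norm
    have hmem : x α * c.t⁻¹ ∈ c.N := (Prop21.mem_coset_iff _ _ _).mp (hx α (m + 1)).1
    have h2 : (x α)⁻¹ * c.t ∈ c.N := by
      have h3 := c.norm.conj_mem _ hmem (x α)⁻¹
      have h4 : (x α)⁻¹ * (x α * c.t⁻¹) * ((x α)⁻¹)⁻¹ = ((x α)⁻¹ * c.t)⁻¹ := by group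
      rw [h4] at h3
      simpa using c.N.inv_mem h3
    have hq : (QuotientGroup.mk (x α) : G ⧸ c.N) = QuotientGroup.mk c.t :=
      QuotientGroup.eq.mpr h2
    rw [← QuotientGroup.eq_one_iff]
    calc (↑(c.t ^ (m + 1).factorial) : G ⧸ c.N)
        = (↑c.t : G ⧸ c.N) ^ (m + 1).factorial := by rw [QuotientGroup.mk_pow]
      _ = (↑(x α) : G ⧸ c.N) ^ (m + 1).factorial := by rw [hq]
      _ = (↑(x α ^ (m + 1).factorial) : G ⧸ c.N) := by rw [QuotientGroup.mk_pow]
      _ = 1 := by rw [hfac]; rfl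
  -- distinct branches give non-conjugate limit elements
  have hnc : ∀ α β : ℕ → Bool, α ≠ β → ¬ IsConj (x α) (x β) := by
    intro α β hne hconj
    have hEx : ∃ n, α n ≠ β n := by
      by_contra hc
      push_neg at hc
      exact hne (funext hc)
    set n := Nat.find hEx with hndef
    have hspec : α n ≠ β n := Nat.find_spec hEx
    have hmin : ∀ k < n, α k = β k := fun k hk => by
      by_contra hk'
      exact (Nat.find_min hEx hk) hk'
    have hch : Prop21.chain α n = Prop21.chain β n := Prop21.chain_eq α β n hmin
    have h1 : x α ∈ (nd (α n :: Prop21.chain α n)).set := (hx α (n + 1)).1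
    have h2 : x β ∈ (nd (β n :: Prop21.chain α n)).set := by
      have h2' := (hx β (n + 1)).1
      have hcb : Prop21.chain β (n + 1) = β n :: Prop21.chain β n := rfl
      rw [hcb, ← hch] at h2'
      exact h2'
    have sep := (spec (Prop21.chain α n)).2.2.2.2
    cases hα : α n <;> cases hβ : β n
    · exact hspec (hα.trans hβ.symm)
    · rw [hα] at h1; rw [hβ] at h2; exact sep _ h1 _ h2 hconj
    · rw [hα] at h1; rw [hβ] at h2; exact sep _ h2 _ h1 hconj.symm
    · exact hspec (hα.trans hβ.symm)
  -- the injection into conjugacy classes of p^∞-elements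
  let f : ULift.{u} (ℕ → Bool) → {c : ConjClasses G | ∃ y ∈ c.carrier, IsPInftyElement p y} :=
    fun a => ⟨ConjClasses.mk (x a.down),
      ⟨x a.down, ConjClasses.mem_carrier_iff_mk_eq.mpr rfl,
        hP.2.1 _ (hx a.down 0).2, hford a.down⟩⟩
  have hinj : Function.Injective f := by
    intro a b hab
    have hmk : ConjClasses.mk (x a.down) = ConjClasses.mk (x b.down) :=
      congrArg Subtype.val hab
    rw [ConjClasses.mk_eq_mk_iff_isConj] at hmk
    by_contra hne
    have hdne : a.down ≠ b.down := by
      intro hd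
      apply hne
      cases a; cases b; cases hd; rfl
    exact hnc a.down b.down hdne hmk
  have hmk : Cardinal.mk (ℕ → Bool) = Cardinal.continuum := by
    rw [← Cardinal.power_def, Cardinal.mk_bool, Cardinal.mk_nat, Cardinal.two_power_aleph0]
  calc Cardinal.continuum = Cardinal.lift.{u} (Cardinal.mk (ℕ → Bool)) := by
        rw [hmk, Cardinal.lift_continuum]
    _ = Cardinal.mk (ULift.{u} (ℕ → Bool)) := (Cardinal.mk_uLift _).symm
    _ ≤ Cardinal.mk {c : ConjClasses G | ∃ y ∈ c.carrier, IsPInftyElement p y} :=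
        Cardinal.mk_le_of_injective hinj
end

section
/- Let G be a profinite group, p a prime and P a p-Sylow subgroup of G. Let K be an open normal subgroup of G and t ∈ P with Kt ∩ P ⊆ t^G. If K is an extension of a pro-p′-group by a pro-p-group (i.e., K has a closed normal pro-p′ subgroup R with K/R a pro-p group), then t has finite order. -/
open scoped Pointwise

universe u

section Aux

open Subgroup

variable {G : Type u} [Group G] [TopologicalSpace G] [IsTopologicalGroup G]

lemma aux_quotFinite [CompactSpace G] (N : OpenNormalSubgroup G) :
    Finite (G ⧸ (N : Subgroup G)) :=
  Subgroup.quotient_finite_of_isOpen _ N.toOpenSubgroup.isOpen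

lemma exists_ons_subset [CompactSpace G] [T2Space G] [TotallyDisconnectedSpace G] {V : Set G}
    (hV : IsOpen V) (h1 : (1 : G) ∈ V) :
    ∃ N : OpenNormalSubgroup G, (N : Set G) ⊆ V := by
  obtain ⟨W, hWc, hW1, hWV⟩ := compact_exists_isClopen_in_isOpen hV h1
  obtain ⟨N, hN⟩ := IsTopologicalGroup.exist_openNormalSubgroup_sub_clopen_nhds_of_one hWc hW1
  exact ⟨N, hN.trans hWV⟩

/-- A `p`-element has `p`-power order in every finite (open-normal) quotient. -/
lemma IsPElement.pow_mem {p : ℕ} (hp : p ≠ 0) {x : G} (hx : IsPElement p x)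
    (N : OpenNormalSubgroup G) :
    ∃ n : ℕ, x ^ p ^ n ∈ (N : Subgroup G) := by
  have hxT : x ∈ (Subgroup.zpowers x).topologicalClosure :=
    Subgroup.le_topologicalClosure _ (Subgroup.mem_zpowers x)
  set T : Subgroup G := (Subgroup.zpowers x).topologicalClosure with hT
  set U : Subgroup T := ((N : Subgroup G)).comap T.subtype with hU
  have hUn : U.Normal := Subgroup.Normal.comap inferInstance _
  have hUo : IsOpen (U : Set T) := by
    rw [hU, Subgroup.coe_comap]
    exact N.toOpenSubgroup.isOpen.preimage continuous_subtype_val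
  obtain ⟨n, hn⟩ := hx U hUn hUo
  refine ⟨n, ?_⟩
  have hfin : Finite (T ⧸ U) := by
    refine Nat.finite_of_card_ne_zero ?_
    rw [← Subgroup.index_eq_card, hn]
    exact pow_ne_zero n hp
  set x' : T := ⟨x, hxT⟩
  have h1 : orderOf ((QuotientGroup.mk' U) x') ∣ p ^ n := by
    rw [← hn, Subgroup.index_eq_card]
    exact orderOf_dvd_natCard _
  have h2 : ((QuotientGroup.mk' U) x') ^ p ^ n = 1 := orderOf_dvd_iff_pow_eq_one.mp h1
  have h3 : x' ^ p ^ n ∈ U := by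
    rwa [← map_pow, ← MonoidHom.mem_ker, QuotientGroup.ker_mk'] at h2
  have h4 : ((x' ^ p ^ n : T) : G) ∈ (N : Subgroup G) := h3
  simpa using h4

/-- Criterion: if the procyclic closure has `p`-group image in every finite quotient,
`x` is a `p`-element. -/
lemma isPElement_of_images [CompactSpace G] [T2Space G] [TotallyDisconnectedSpace G]
    {p : ℕ} (hp : p.Prime) {x : G}
    (h : ∀ N : OpenNormalSubgroup G, ∃ n : ℕ,
      Nat.card ((Subgroup.zpowers x).topologicalClosure.map
        (QuotientGroup.mk' (N : Subgroup G))) = p ^ n) :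
    IsPElement p x := by
  intro U hUn hUo
  obtain ⟨V, hVo, hVU⟩ := isOpen_induced_iff.mp hUo
  have h1V : (1 : G) ∈ V := by
    have h0 : ((1 : (Subgroup.zpowers x).topologicalClosure) : G) ∈ V := by
      rw [← Set.mem_preimage, hVU]
      exact U.one_mem
    simpa using h0
  obtain ⟨N, hNV⟩ := exists_ons_subset hVo h1V
  obtain ⟨n, hn⟩ := h N
  have hle : ((N : Subgroup G).comap (Subgroup.zpowers x).topologicalClosure.subtype) ≤ U := by
    intro g hg
    have h5 : (g : G) ∈ V := hNV (Subgroup.mem_comap.mp hg)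
    have h6 : g ∈ Subtype.val ⁻¹' V := h5
    rwa [hVU] at h6
  have hidx : ((N : Subgroup G).comap (Subgroup.zpowers x).topologicalClosure.subtype).index
      = p ^ n := by
    rw [Subgroup.index_comap, Subgroup.range_subtype, ← QuotientGroup.ker_mk' (N : Subgroup G),
      Subgroup.relIndex_ker, hn]
  have hdvd : U.index ∣ p ^ n := by
    rw [← hidx]; exact Subgroup.index_dvd_of_le hle
  obtain ⟨m, _, hm⟩ := (Nat.dvd_prime_pow hp).mp hdvd
  exact ⟨m, hm⟩

/-- The image of a closed subgroup of `p`-elements in a finite quotient is a `p`-group. -/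
lemma image_isPGroup {p : ℕ} (hp : p ≠ 0) (P : Subgroup G) (hPel : ∀ x ∈ P, IsPElement p x)
    (N : OpenNormalSubgroup G) :
    IsPGroup p (P.map (QuotientGroup.mk' (N : Subgroup G))) := by
  intro g
  obtain ⟨y, hy, hyg⟩ := Subgroup.mem_map.mp g.2
  obtain ⟨n, hn⟩ := (hPel y hy).pow_mem hp N
  refine ⟨n, ?_⟩
  have h1 : ((g : G ⧸ (N : Subgroup G)) ^ p ^ n) = 1 := by
    rw [← hyg, ← map_pow]
    rwa [← MonoidHom.mem_ker, QuotientGroup.ker_mk']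
  exact Subtype.ext (by simpa using h1)

end Aux

section FiniteLemma
open Subgroup

variable {H : Type u} [Group H] [Finite H]

lemma mem_R_of_pprime {p : ℕ} (hp : p.Prime) {Kb Rb : Subgroup H}
    (hKR : ∀ x ∈ Kb, ∃ j : ℕ, x ^ p ^ j ∈ Rb) {x : H} (hx : x ∈ Kb)
    (hord : ¬ p ∣ orderOf x) : x ∈ Rb := by
  obtain ⟨j, hj⟩ := hKR x hx
  by_cases h1 : orderOf x ≤ 1
  · have hpos := orderOf_pos x
    have hx1 : x = 1 := orderOf_eq_one_iff.mp (by omega)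
    rw [hx1]; exact Rb.one_mem
  · have hco : Nat.Coprime (p ^ j) (orderOf x) :=
      Nat.Coprime.pow_left _ ((hp.coprime_iff_not_dvd).mpr hord)
    obtain ⟨m, -, hm⟩ := Nat.exists_mul_mod_eq_one_of_coprime hco (by omega)
    have hxeq : x = (x ^ p ^ j) ^ m := by
      rw [← pow_mul, ← pow_mod_orderOf, hm, pow_one]
    rw [hxeq]
    exact Rb.pow_mem hj m

lemma orderOf_not_dvd_of_mem {p : ℕ} {Rb : Subgroup H} (hRcard : ¬ p ∣ Nat.card Rb)
    {x : H} (hx : x ∈ Rb) : ¬ p ∣ orderOf x :=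
  fun hdvd => hRcard (hdvd.trans (Subgroup.orderOf_dvd_natCard Rb hx))

lemma finiteL {p : ℕ} (hp : p.Prime) (Kb Pb Rb : Subgroup H) [hKn : Kb.Normal]
    (hPp : IsPGroup p Pb) (hPidx : ¬ p ∣ Pb.index)
    (hRK : Rb ≤ Kb) (hRnK : ∀ k ∈ Kb, ∀ r ∈ Rb, k * r * k⁻¹ ∈ Rb)
    (hRcard : ¬ p ∣ Nat.card Rb)
    (hKR : ∀ x ∈ Kb, ∃ j : ℕ, x ^ p ^ j ∈ Rb)
    (t : H) (htP : t ∈ Pb) (hconj : ∀ s ∈ Pb ⊓ Kb, IsConj t (s * t)) :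
    orderOf t ≤ Kb.index := by
  haveI : Fact p.Prime := ⟨hp⟩
  classical
  -- (c1) Rb is normal in H
  haveI hRN : Rb.Normal := by
    constructor
    intro r hr g
    have hmem : g * r * g⁻¹ ∈ Kb := hKn.conj_mem r (hRK hr) g
    refine mem_R_of_pprime hp hKR hmem ?_
    have hordeq : orderOf (g * r * g⁻¹) = orderOf r := by
      have := orderOf_injective (MulAut.conj g).toMonoidHom (MulEquiv.injective _) r
      simpa [MulAut.conj] using this
    rw [hordeq]
    exact orderOf_not_dvd_of_mem hRcard hr
  -- (c2) card of Pb ⊓ Kb is a p-power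
  obtain ⟨A, hA⟩ := (IsPGroup.to_inf_left (K := Kb) hPp).exists_card_eq
  -- (c3) card Kb = rel * a
  have hcardK : Nat.card Kb = Pb.relIndex Kb * Nat.card (Pb ⊓ Kb : Subgroup H) := by
    rw [Subgroup.card_eq_card_quotient_mul_card_subgroup ((Pb ⊓ Kb).subgroupOf Kb),
      ← Subgroup.index_eq_card]
    congr 1
    · exact Subgroup.inf_relIndex_right Pb Kb
    · exact Nat.card_congr (Subgroup.subgroupOfEquivOfLe inf_le_right).toEquiv
  -- (c4) p ∤ rel
  have hrel : ¬ p ∣ Pb.relIndex Kb := by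
    have h2 : ¬ p ∣ Pb.relIndex (Pb ⊔ Kb) := by
      intro hd
      exact hPidx (hd.trans (Subgroup.relIndex_dvd_index_of_le le_sup_left))
    have hcardL1 : Nat.card (Pb ⊔ Kb : Subgroup H)
        = Pb.relIndex (Pb ⊔ Kb) * Nat.card Pb := by
      rw [Subgroup.card_eq_card_quotient_mul_card_subgroup (Pb.subgroupOf (Pb ⊔ Kb)),
        ← Subgroup.index_eq_card]
      congr 1
      exact Nat.card_congr (Subgroup.subgroupOfEquivOfLe le_sup_left).toEquiv
    have hcardL2 : Nat.card (Pb ⊔ Kb : Subgroup H)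
        = Kb.relIndex Pb * Nat.card Kb := by
      rw [Subgroup.card_eq_card_quotient_mul_card_subgroup (Kb.subgroupOf (Pb ⊔ Kb)),
        ← Subgroup.index_eq_card]
      congr 1
      · exact Subgroup.relIndex_sup_right Pb Kb
      · exact Nat.card_congr (Subgroup.subgroupOfEquivOfLe le_sup_right).toEquiv
    have hcardP : Nat.card Pb = Kb.relIndex Pb * Nat.card (Pb ⊓ Kb : Subgroup H) := by
      rw [Subgroup.card_eq_card_quotient_mul_card_subgroup ((Kb ⊓ Pb).subgroupOf Pb),
        ← Subgroup.index_eq_card]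
      congr 1
      · exact Subgroup.inf_relIndex_right Kb Pb
      · have hcomm : (Kb ⊓ Pb) = (Pb ⊓ Kb) := inf_comm Kb Pb
        rw [hcomm]
        exact Nat.card_congr (Subgroup.subgroupOfEquivOfLe inf_le_left).toEquiv
    have hane : Nat.card (Pb ⊓ Kb : Subgroup H) ≠ 0 := Nat.card_pos.ne'
    have hKrelP : Kb.relIndex Pb ≠ 0 := by
      rw [Subgroup.relIndex]
      exact Subgroup.index_ne_zero_of_finite
    have heq : Pb.relIndex (Pb ⊔ Kb) * (Kb.relIndex Pb * Nat.card (Pb ⊓ Kb : Subgroup H))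
        = Kb.relIndex Pb * (Pb.relIndex Kb * Nat.card (Pb ⊓ Kb : Subgroup H)) := by
      rw [← hcardP, ← hcardK, ← hcardL1, ← hcardL2]
    have : Pb.relIndex (Pb ⊔ Kb) = Pb.relIndex Kb := by
      have h3 : Pb.relIndex (Pb ⊔ Kb) * Kb.relIndex Pb = Kb.relIndex Pb * Pb.relIndex Kb := by
        have := heq
        rw [← mul_assoc, ← mul_assoc] at this
        exact Nat.eq_of_mul_eq_mul_right (Nat.pos_of_ne_zero hane) this
      have h4 := h3
      rw [mul_comm (Kb.relIndex Pb) (Pb.relIndex Kb)] at h4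
      exact Nat.eq_of_mul_eq_mul_right (Nat.pos_of_ne_zero hKrelP) h4
    rw [← this]
    exact h2
  -- (c5) index of Rb in Kb is a p-power
  haveI hRbKn : (Rb.subgroupOf Kb).Normal := by
    constructor
    intro n hn g
    have := hRnK g.1 g.2 n.1 (by simpa [Subgroup.mem_subgroupOf] using hn)
    simpa [Subgroup.mem_subgroupOf] using this
  have hQtp : IsPGroup p (Kb ⧸ Rb.subgroupOf Kb) := by
    intro q
    induction q using QuotientGroup.induction_on with
    | H k =>
      obtain ⟨j, hj⟩ := hKR k.1 k.2
      refine ⟨j, ?_⟩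
      rw [← QuotientGroup.mk_pow, QuotientGroup.eq_one_iff]
      simpa [Subgroup.mem_subgroupOf] using hj
  obtain ⟨B, hB⟩ := hQtp.exists_card_eq
  have hd' : (Rb.subgroupOf Kb).index = p ^ B := by rw [Subgroup.index_eq_card, hB]
  -- (c6) card Kb = d' * card Rb
  have hcardK2 : Nat.card Kb = (Rb.subgroupOf Kb).index * Nat.card Rb := by
    rw [Subgroup.card_eq_card_quotient_mul_card_subgroup (Rb.subgroupOf Kb),
      ← Subgroup.index_eq_card]
    congr 1
    exact Nat.card_congr (Subgroup.subgroupOfEquivOfLe hRK).toEquiv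
  -- (c7) a = d'
  have haeq : Nat.card (Pb ⊓ Kb : Subgroup H) = (Rb.subgroupOf Kb).index := by
    have h5a : Nat.card (Pb ⊓ Kb : Subgroup H) ∣ Nat.card Kb :=
      Subgroup.card_dvd_of_le inf_le_right
    have h5 : p ^ A ∣ p ^ B * Nat.card Rb := by
      rw [← hA, ← hd', ← hcardK2]; exact h5a
    have h6a : (Rb.subgroupOf Kb).index ∣ Nat.card Kb := by
      rw [hcardK2]; exact dvd_mul_right _ _
    have h6 : p ^ B ∣ p ^ A * (Pb.relIndex Kb) := by
      rw [← hA, ← hd', Nat.mul_comm (Nat.card (Pb ⊓ Kb : Subgroup H)) (Pb.relIndex Kb), ← hcardK]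
      exact h6a
    have hcop1 : Nat.Coprime (p ^ A) (Nat.card Rb) :=
      Nat.Coprime.pow_left _ ((hp.coprime_iff_not_dvd).mpr hRcard)
    have hcop2 : Nat.Coprime (p ^ B) (Pb.relIndex Kb) :=
      Nat.Coprime.pow_left _ ((hp.coprime_iff_not_dvd).mpr hrel)
    have h7 : p ^ A ∣ p ^ B := (Nat.Coprime.dvd_of_dvd_mul_right hcop1 h5)
    have h8 : p ^ B ∣ p ^ A := (Nat.Coprime.dvd_of_dvd_mul_right hcop2 h6)
    rw [hA, hd']
    exact Nat.dvd_antisymm h7 h8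
  -- (c8) every element of Kb decomposes as s * r
  have hdecomp : ∀ k ∈ Kb, ∃ s ∈ Pb ⊓ Kb, ∃ r ∈ Rb, s * r = k := by
    set Φ : (Pb ⊓ Kb : Subgroup H) × Rb → H := fun x => (x.1 : H) * (x.2 : H) with hΦ
    have hinj : Function.Injective Φ := by
      rintro ⟨s, r⟩ ⟨s', r'⟩ hsr
      simp only [hΦ] at hsr
      have hkey : (s' : H)⁻¹ * s = (r' : H) * (r : H)⁻¹ := by
        have haux : (s' : H)⁻¹ * ((s : H) * r) * (r : H)⁻¹ = (r' : H) * (r : H)⁻¹ := by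
          rw [hsr]; group
        calc (s' : H)⁻¹ * s = (s' : H)⁻¹ * ((s : H) * r) * (r : H)⁻¹ := by group
        _ = (r' : H) * (r : H)⁻¹ := haux
      have hmem1 : (s' : H)⁻¹ * s ∈ Pb ⊓ Kb := mul_mem (inv_mem s'.2) s.2
      have hmem2 : (s' : H)⁻¹ * s ∈ Rb := by rw [hkey]; exact mul_mem r'.2 (inv_mem r.2)
      have hord1 : orderOf ((s' : H)⁻¹ * s) ∣ p ^ A := by
        rw [← hA]
        exact Subgroup.orderOf_dvd_natCard _ hmem1
      have hord2 : ¬ p ∣ orderOf ((s' : H)⁻¹ * s) := orderOf_not_dvd_of_mem hRcard hmem2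
      have hord3 : orderOf ((s' : H)⁻¹ * s) = 1 := by
        obtain ⟨i, hi, hieq⟩ := (Nat.dvd_prime_pow hp).mp hord1
        rcases Nat.eq_zero_or_pos i with h | h
        · rw [hieq, h, pow_zero]
        · exfalso
          exact hord2 (hieq ▸ dvd_pow_self p h.ne')
      have h9 : (s' : H)⁻¹ * s = 1 := orderOf_eq_one_iff.mp hord3
      have h10 : (s' : H) = s := by
        have := congrArg (fun z => (s' : H) * z) h9
        simpa [mul_assoc] using this.symm
      have h11 : (r' : H) = r := by
        have h12 := hsr
        rw [h10] at h12
        exact (mul_left_cancel h12).symm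
      exact Prod.ext (Subtype.ext h10.symm) (Subtype.ext h11.symm)
    have hsub : Set.range Φ ⊆ (Kb : Set H) := by
      rintro _ ⟨⟨s, r⟩, rfl⟩
      exact mul_mem (s.2.2) (hRK r.2)
    have hcard : ((Kb : Set H)).ncard ≤ (Set.range Φ).ncard := by
      have e1 : (Set.range Φ).ncard = Nat.card ((Pb ⊓ Kb : Subgroup H) × Rb) := by
        rw [← Nat.card_coe_set_eq]
        exact Nat.card_congr (Equiv.ofInjective Φ hinj).symm
      have e2 : ((Kb : Set H)).ncard = Nat.card Kb := by
        rw [← Nat.card_coe_set_eq, SetLike.coe_sort_coe]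
      rw [e1, e2, Nat.card_prod, hcardK2, haeq, mul_comm]
    have heq : Set.range Φ = (Kb : Set H) :=
      Set.eq_of_subset_of_ncard_le hsub hcard (Set.toFinite _)
    intro k hk
    have : k ∈ Set.range Φ := heq ▸ hk
    obtain ⟨⟨s, r⟩, hsr⟩ := this
    exact ⟨s, s.2, r, r.2, hsr⟩
  -- (c9) in H ⧸ Rb, the whole coset K̃t̃ is in the conjugacy class of t̃
  set ρ := QuotientGroup.mk' Rb with hρ
  have hconj2 : ∀ kq ∈ Kb.map ρ, IsConj (ρ t) (kq * ρ t) := by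
    intro kq hkq
    obtain ⟨k, hk, rfl⟩ := Subgroup.mem_map.mp hkq
    obtain ⟨s, hs, r, hr, hsrk⟩ := hdecomp k hk
    have hkey : k * t = (s * t) * (t⁻¹ * r * t) := by
      rw [← hsrk]; group
    have hmem : t⁻¹ * r * t ∈ Rb := by
      have := hRN.conj_mem r hr t⁻¹
      simpa using this
    have hz : ρ (t⁻¹ * r * t) = 1 := (QuotientGroup.eq_one_iff _).mpr hmem
    have hw : ρ (k * t) = ρ (s * t) := by rw [hkey, map_mul, hz, mul_one]
    rw [← map_mul, hw]
    exact ρ.map_isConj (hconj s hs)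
  -- (c10) counting in H ⧸ Rb
  haveI : Finite (H ⧸ Rb) := Quotient.finite _
  haveI : Finite (ConjAct (H ⧸ Rb)) := inferInstanceAs (Finite (H ⧸ Rb))
  set tq := ρ t with htq
  set O := MulAction.orbit (ConjAct (H ⧸ Rb)) tq with hO
  have horbit : ∀ kq ∈ Kb.map ρ, kq * tq ∈ O := by
    intro kq hkq
    obtain ⟨c, hc⟩ := isConj_iff.mp (hconj2 kq hkq)
    exact ⟨ConjAct.toConjAct c, by simpa [ConjAct.smul_def] using hc⟩
  have hcardO : Nat.card (Kb.map ρ) ≤ Nat.card O := by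
    let f : (Kb.map ρ) → O := fun k => ⟨(k : H ⧸ Rb) * tq, horbit k k.2⟩
    have hfinj : Function.Injective f := by
      rintro a b hab
      have h1 : (a : H ⧸ Rb) * tq = (b : H ⧸ Rb) * tq := congrArg Subtype.val hab
      exact Subtype.ext (mul_right_cancel h1)
    exact Nat.card_le_card_of_injective f hfinj
  set St := MulAction.stabilizer (ConjAct (H ⧸ Rb)) tq with hSt
  have hcard1 : Nat.card (H ⧸ Rb) = Nat.card O * Nat.card St := by
    have h12 := Subgroup.card_eq_card_quotient_mul_card_subgroup St
    have h13 : Nat.card (ConjAct (H ⧸ Rb) ⧸ St) = Nat.card O := by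
      rw [← Subgroup.index_eq_card, hSt, MulAction.index_stabilizer, ← Nat.card_coe_set_eq]
    calc Nat.card (H ⧸ Rb) = Nat.card (ConjAct (H ⧸ Rb)) := rfl
    _ = Nat.card (ConjAct (H ⧸ Rb) ⧸ St) * Nat.card St := h12
    _ = Nat.card O * Nat.card St := by rw [h13]
  have hcard2 : Nat.card (H ⧸ Rb) = (Kb.map ρ).index * Nat.card (Kb.map ρ) := by
    rw [Subgroup.card_eq_card_quotient_mul_card_subgroup (Kb.map ρ), Subgroup.index_eq_card]
  have hKmappos : 0 < Nat.card (Kb.map ρ) := Nat.card_pos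
  have hineq : Nat.card (Kb.map ρ) * Nat.card St ≤ Nat.card (Kb.map ρ) * (Kb.map ρ).index := by
    calc Nat.card (Kb.map ρ) * Nat.card St ≤ Nat.card O * Nat.card St :=
          Nat.mul_le_mul_right _ hcardO
    _ = (Kb.map ρ).index * Nat.card (Kb.map ρ) := by rw [← hcard1, hcard2]
    _ = Nat.card (Kb.map ρ) * (Kb.map ρ).index := mul_comm _ _
  have hstab : Nat.card St ≤ (Kb.map ρ).index := Nat.le_of_mul_le_mul_left hineq hKmappos
  have hts : ConjAct.toConjAct tq ∈ St := by
    rw [hSt, ConjAct.stabilizer_eq_centralizer]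
    refine Subgroup.mem_centralizer_iff.mpr ?_
    rintro y rfl
    exact (Commute.refl (ConjAct.toConjAct tq)).eq
  have hordtq : orderOf tq ∣ Nat.card St := by
    have heq : orderOf (ConjAct.toConjAct tq) = orderOf tq :=
      orderOf_injective (ConjAct.toConjAct : (H ⧸ Rb) ≃* ConjAct (H ⧸ Rb)).toMonoidHom
        (MulEquiv.injective _) tq
    rw [← heq]
    exact Subgroup.orderOf_dvd_natCard St hts
  have hStpos : 0 < Nat.card St := Nat.card_pos
  have h14 : orderOf tq ≤ (Kb.map ρ).index :=
    le_trans (Nat.le_of_dvd hStpos hordtq) hstab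
  have hidxmap : (Kb.map ρ).index = Kb.index :=
    Subgroup.index_map_eq Kb (QuotientGroup.mk'_surjective Rb)
      (by rw [QuotientGroup.ker_mk']; exact hRK)
  have htRb : t ^ orderOf tq ∈ Rb := by
    have h15 : ρ (t ^ orderOf tq) = 1 := by
      rw [map_pow]; exact pow_orderOf_eq_one tq
    rwa [← MonoidHom.mem_ker, QuotientGroup.ker_mk'] at h15
  have htP2 : t ^ orderOf tq ∈ Pb := Pb.pow_mem htP _
  have hordpow : ∃ k, (t ^ orderOf tq) ^ p ^ k = 1 := by
    obtain ⟨k, hk⟩ := hPp ⟨t ^ orderOf tq, htP2⟩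
    exact ⟨k, by simpa [← Subgroup.coe_pow] using congrArg Subtype.val hk⟩
  have hord5 : orderOf (t ^ orderOf tq) = 1 := by
    obtain ⟨k, hk⟩ := hordpow
    have hdvd : orderOf (t ^ orderOf tq) ∣ p ^ k := orderOf_dvd_iff_pow_eq_one.mpr hk
    obtain ⟨i, _, hieq⟩ := (Nat.dvd_prime_pow hp).mp hdvd
    rcases Nat.eq_zero_or_pos i with h | h
    · rw [hieq, h, pow_zero]
    · exfalso
      exact (orderOf_not_dvd_of_mem hRcard htRb)
        (hieq ▸ dvd_pow_self p h.ne')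
  have h16 : t ^ orderOf tq = 1 := orderOf_eq_one_iff.mp hord5
  have h17 : orderOf t ∣ orderOf tq := orderOf_dvd_iff_pow_eq_one.mpr h16
  have htqpos : 0 < orderOf tq := orderOf_pos tq
  calc orderOf t ≤ orderOf tq := Nat.le_of_dvd htqpos h17
  _ ≤ (Kb.map ρ).index := h14
  _ = Kb.index := hidxmap
end FiniteLemma

section PillarA

open Subgroup CategoryTheory OrderDual Opposite

variable {G : Type u} [Group G] [TopologicalSpace G] [IsTopologicalGroup G]

instance ons_quotFinite [CompactSpace G] (N : OpenNormalSubgroup G) :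
    Finite (G ⧸ (N : Subgroup G)) :=
  Subgroup.quotient_finite_of_isOpen _ N.toOpenSubgroup.isOpen

/-- Pushforward between quotients. -/
private def qmap {N M : Subgroup G} [N.Normal] [M.Normal] (h : N ≤ M) :
    G ⧸ N →* G ⧸ M :=
  QuotientGroup.map N M (MonoidHom.id G) (fun x hx => h hx)

private lemma qmap_mk {N M : Subgroup G} [N.Normal] [M.Normal] (h : N ≤ M) (x : G) :
    qmap h (QuotientGroup.mk' N x) = QuotientGroup.mk' M x :=
  QuotientGroup.map_mk' N M (MonoidHom.id G) _ x

private lemma qmap_surj {N M : Subgroup G} [N.Normal] [M.Normal] (h : N ≤ M) :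
    Function.Surjective (qmap h) := by
  intro y
  obtain ⟨x, rfl⟩ := QuotientGroup.mk'_surjective M y
  exact ⟨QuotientGroup.mk' N x, qmap_mk h x⟩

private lemma qmap_comp_mk' {N M : Subgroup G} [N.Normal] [M.Normal] (h : N ≤ M) :
    (qmap h).comp (QuotientGroup.mk' N) = QuotientGroup.mk' M :=
  MonoidHom.ext (qmap_mk h)

private lemma qmap_qmap {N M L : Subgroup G} [N.Normal] [M.Normal] [L.Normal]
    (h1 : N ≤ M) (h2 : M ≤ L) (x : G ⧸ N) :
    qmap h2 (qmap h1 x) = qmap (h1.trans h2) x := by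
  induction x using QuotientGroup.induction_on with
  | H z => exact congrArg (qmap h2) (qmap_mk h1 z) |>.trans ((qmap_mk h2 z).trans (qmap_mk _ z).symm)

instance : IsDirected (OpenNormalSubgroup G)ᵒᵈ (· ≤ ·) :=
  ⟨fun a b => ⟨toDual (ofDual a ⊓ ofDual b),
    by exact (inf_le_left : ofDual a ⊓ ofDual b ≤ ofDual a),
    by exact (inf_le_right : ofDual a ⊓ ofDual b ≤ ofDual b)⟩⟩

variable [CompactSpace G] (p : ℕ) [Fact p.Prime] (P : Subgroup G)

/-- The open normal subgroup attached to an object of the index category. -/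
private abbrev nsub (X : ((OpenNormalSubgroup G)ᵒᵈ)ᵒᵖ) : OpenNormalSubgroup G :=
  ofDual X.unop

private lemma hom_le {X Y : ((OpenNormalSubgroup G)ᵒᵈ)ᵒᵖ} (f : X ⟶ Y) :
    ((nsub X : OpenNormalSubgroup G) : Subgroup G) ≤ (nsub Y : OpenNormalSubgroup G) := by
  have h : Y.unop ≤ X.unop := leOfHom f.unop
  exact fun x hx => h hx

/-- The inverse system of Sylow subgroups of the finite quotients containing the image of `P`. -/
private def sylF : ((OpenNormalSubgroup G)ᵒᵈ)ᵒᵖ ⥤ Type u where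
  obj X := {Q : Sylow p (G ⧸ ((nsub X : OpenNormalSubgroup G) : Subgroup G)) //
    P.map (QuotientGroup.mk' ((nsub X : OpenNormalSubgroup G) : Subgroup G)) ≤ Q.toSubgroup}
  map {X Y} f := TypeCat.ofHom fun Q => ⟨Sylow.mapSurjective (qmap_surj (hom_le f)) Q.1, by
    rw [Sylow.coe_mapSurjective, ← qmap_comp_mk' (hom_le f), ← Subgroup.map_map]
    exact Subgroup.map_mono Q.2⟩
  map_id X := by
    refine ConcreteCategory.hom_ext _ _ fun Q => ?_
    simp only [TypeCat.ofHom_apply, CategoryTheory.types_id_apply]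
    refine Subtype.ext (Sylow.ext ?_)
    rw [Sylow.coe_mapSurjective]
    have h : qmap (hom_le (𝟙 X))
        = MonoidHom.id (G ⧸ ((nsub X : OpenNormalSubgroup G) : Subgroup G)) := by
      refine MonoidHom.ext fun x => ?_
      induction x using QuotientGroup.induction_on with
      | H z => exact qmap_mk (le_refl _) z
    rw [h, Subgroup.map_id]
  map_comp {X Y Z} f g := by
    refine ConcreteCategory.hom_ext _ _ fun Q => ?_
    simp only [CategoryTheory.types_comp_apply, TypeCat.ofHom_apply]
    refine Subtype.ext (Sylow.ext ?_)
    simp only [Sylow.coe_mapSurjective, Subgroup.map_map]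
    have hcomp : (qmap (hom_le g)).comp (qmap (hom_le f)) = qmap (hom_le (f ≫ g)) :=
      MonoidHom.ext fun x => qmap_qmap (hom_le f) (hom_le g) x
    rw [← hcomp]

private lemma sylF_finite (X : ((OpenNormalSubgroup G)ᵒᵈ)ᵒᵖ) :
    Finite ((sylF (G := G) p P).obj X) := by
  dsimp [sylF]
  infer_instance

private lemma sylF_nonempty (hp : p ≠ 0) (hPel : ∀ x ∈ P, IsPElement p x)
    (X : ((OpenNormalSubgroup G)ᵒᵈ)ᵒᵖ) :
    Nonempty ((sylF (G := G) p P).obj X) := by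
  obtain ⟨Q, hQ⟩ := (image_isPGroup hp P hPel (nsub X)).exists_le_sylow
  exact ⟨⟨Q, hQ⟩⟩

lemma sylow_image [T2Space G] [TotallyDisconnectedSpace G]
    (hp : p.Prime) (hP : IsSylowProP p P) (N₀ : OpenNormalSubgroup G) :
    IsPGroup p (P.map (QuotientGroup.mk' (N₀ : Subgroup G))) ∧
      ¬ p ∣ (P.map (QuotientGroup.mk' (N₀ : Subgroup G))).index := by
  classical
  haveI hFin : ∀ X, Finite ((sylF (G := G) p P).obj X) := sylF_finite p P
  haveI hNe : ∀ X, Nonempty ((sylF (G := G) p P).obj X) :=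
    sylF_nonempty p P hp.pos.ne' hP.2.1
  obtain ⟨u, hu⟩ := nonempty_sections_of_finite_inverse_system (sylF (G := G) p P)
  let XX : OpenNormalSubgroup G → ((OpenNormalSubgroup G)ᵒᵈ)ᵒᵖ := fun N => Opposite.op (toDual N)
  let σ : ∀ N : OpenNormalSubgroup G, Sylow p (G ⧸ (N : Subgroup G)) := fun N => (u (XX N)).1
  have hσP : ∀ N : OpenNormalSubgroup G,
      P.map (QuotientGroup.mk' (N : Subgroup G)) ≤ ((σ N) : Subgroup _) :=
    fun N => (u (XX N)).2
  have hcompat : ∀ {N M : OpenNormalSubgroup G} (h : (N : Subgroup G) ≤ (M : Subgroup G)),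
      Subgroup.map (qmap h) ((σ N) : Subgroup _) = ((σ M) : Subgroup _) := by
    intro N M h
    have hNM : (N : OpenNormalSubgroup G) ≤ M := fun x hx => h hx
    have harrow : XX N ⟶ XX M := (homOfLE (show toDual M ≤ toDual N from hNM)).op
    have h2 : Sylow.mapSurjective (qmap_surj (hom_le harrow)) (u (XX N)).1 = (u (XX M)).1 :=
      congrArg Subtype.val (hu harrow)
    have h3 : (Sylow.mapSurjective (qmap_surj (hom_le harrow)) (u (XX N)).1).toSubgroup
        = ((u (XX M)).1).toSubgroup := congrArg (fun s => s.toSubgroup) h2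
    rw [Sylow.coe_mapSurjective] at h3
    exact h3
  set Qs : Subgroup G := ⨅ N : OpenNormalSubgroup G,
    Subgroup.comap (QuotientGroup.mk' (N : Subgroup G)) ((σ N) : Subgroup _) with hQsdef
  have hNle : ∀ N : OpenNormalSubgroup G,
      (N : Subgroup G) ≤ Subgroup.comap (QuotientGroup.mk' (N : Subgroup G)) ((σ N) : Subgroup _) := by
    intro N n hn
    show QuotientGroup.mk' (N : Subgroup G) n ∈ ((σ N) : Subgroup _)
    have h1 : QuotientGroup.mk' (N : Subgroup G) n = 1 := (QuotientGroup.eq_one_iff n).mpr hn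
    rw [h1]
    exact one_mem _
  have hPQs : P ≤ Qs := le_iInf fun N => Subgroup.map_le_iff_le_comap.mp (hσP N)
  have hQsclosed : IsClosed (Qs : Set G) := by
    rw [hQsdef, Subgroup.coe_iInf]
    refine isClosed_iInter fun N => ?_
    exact Subgroup.isClosed_of_isOpen _
      (Subgroup.isOpen_mono (hNle N) N.toOpenSubgroup.isOpen)
  have hQsel : ∀ x ∈ Qs, IsPElement p x := by
    intro x hx
    refine isPElement_of_images hp ?_
    intro N
    have hTle : (Subgroup.zpowers x).topologicalClosure ≤ Qs :=
      Subgroup.topologicalClosure_minimal _ (Subgroup.zpowers_le.mpr hx) hQsclosed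
    have himle : ((Subgroup.zpowers x).topologicalClosure.map (QuotientGroup.mk' (N : Subgroup G)))
        ≤ ((σ N) : Subgroup _) := by
      refine Subgroup.map_le_iff_le_comap.mpr (le_trans hTle ?_)
      exact iInf_le _ N
    have hcd : Nat.card ((Subgroup.zpowers x).topologicalClosure.map
        (QuotientGroup.mk' (N : Subgroup G))) ∣ Nat.card ((σ N) : Subgroup _) :=
      Subgroup.card_dvd_of_le himle
    obtain ⟨nn, hnn⟩ := (σ N).isPGroup'.exists_card_eq
    rw [hnn] at hcd
    obtain ⟨mm, _, hmm⟩ := (Nat.dvd_prime_pow hp).mp hcd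
    exact ⟨mm, hmm⟩
  have hQP : Qs = P := hP.2.2 Qs hQsclosed hQsel hPQs
  have hmono : ∀ {A B : OpenNormalSubgroup G} (hAB : (A : Subgroup G) ≤ (B : Subgroup G)) {x : G},
      x ∈ Subgroup.comap (QuotientGroup.mk' (A : Subgroup G)) ((σ A) : Subgroup _) →
      x ∈ Subgroup.comap (QuotientGroup.mk' (B : Subgroup G)) ((σ B) : Subgroup _) := by
    intro A B hAB x hx
    have h := hcompat hAB
    show QuotientGroup.mk' (B : Subgroup G) x ∈ ((σ B) : Subgroup _)
    rw [← h]
    exact Subgroup.mem_map.mpr ⟨QuotientGroup.mk' (A : Subgroup G) x, hx, qmap_mk hAB x⟩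
  have hinf1 : ∀ M : OpenNormalSubgroup G,
      (((N₀ ⊓ M) : OpenNormalSubgroup G) : Subgroup G) ≤ (N₀ : Subgroup G) :=
    fun M x hx => hx.1
  have hinf2 : ∀ M : OpenNormalSubgroup G,
      (((N₀ ⊓ M) : OpenNormalSubgroup G) : Subgroup G) ≤ (M : Subgroup G) :=
    fun M x hx => hx.2
  have hsurj : ((σ N₀) : Subgroup _) ≤ P.map (QuotientGroup.mk' (N₀ : Subgroup G)) := by
    intro y hy
    set D : OpenNormalSubgroup G → Set G := fun M =>
      (⇑(QuotientGroup.mk' (N₀ : Subgroup G)) ⁻¹' {y}) ∩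
        ↑(Subgroup.comap (QuotientGroup.mk' (((N₀ ⊓ M) : OpenNormalSubgroup G) : Subgroup G))
          ((σ (N₀ ⊓ M)) : Subgroup _)) with hDdef
    have hdir : Directed (· ⊇ ·) D := by
      intro M₁ M₂
      refine ⟨M₁ ⊓ M₂, ?_, ?_⟩
      · intro x hx
        refine ⟨hx.1, ?_⟩
        have hle : (((N₀ ⊓ (M₁ ⊓ M₂)) : OpenNormalSubgroup G) : Subgroup G)
            ≤ (((N₀ ⊓ M₁) : OpenNormalSubgroup G) : Subgroup G) :=
          fun z hz => ⟨hz.1, hz.2.1⟩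
        exact hmono hle hx.2
      · intro x hx
        refine ⟨hx.1, ?_⟩
        have hle : (((N₀ ⊓ (M₁ ⊓ M₂)) : OpenNormalSubgroup G) : Subgroup G)
            ≤ (((N₀ ⊓ M₂) : OpenNormalSubgroup G) : Subgroup G) :=
          fun z hz => ⟨hz.1, hz.2.2⟩
        exact hmono hle hx.2
    have hne : ∀ M : OpenNormalSubgroup G, (D M).Nonempty := by
      intro M
      have h := hcompat (hinf1 M)
      have hy2 : y ∈ Subgroup.map (qmap (hinf1 M)) ((σ (N₀ ⊓ M)) : Subgroup _) := by
        rw [h]; exact hy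
      obtain ⟨zb, hzb, hzby⟩ := Subgroup.mem_map.mp hy2
      obtain ⟨z, rfl⟩ := QuotientGroup.mk'_surjective _ zb
      refine ⟨z, ?_, hzb⟩
      show QuotientGroup.mk' (N₀ : Subgroup G) z ∈ ({y} : Set _)
      rw [Set.mem_singleton_iff, ← hzby, qmap_mk]
    obtain ⟨y₀, hy₀⟩ := QuotientGroup.mk'_surjective (N₀ : Subgroup G) y
    have hDclosed : ∀ M : OpenNormalSubgroup G, IsClosed (D M) := by
      intro M
      refine IsClosed.inter ?_ ?_
      · have hset : (⇑(QuotientGroup.mk' (N₀ : Subgroup G)) ⁻¹' {y})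
            = (fun g => g⁻¹ * y₀) ⁻¹' ((N₀ : Subgroup G) : Set G) := by
          ext g
          simp only [Set.mem_preimage, Set.mem_singleton_iff]
          rw [← hy₀, QuotientGroup.mk'_eq_mk']
          constructor
          · rintro ⟨z, hz, rfl⟩
            have hzz : g⁻¹ * (g * z) = z := by group
            show g⁻¹ * (g * z) ∈ ((N₀ : Subgroup G) : Set G)
            rw [hzz]
            exact hz
          · intro hg
            exact ⟨g⁻¹ * y₀, hg, by group⟩
        rw [hset]
        exact ((Subgroup.isClosed_of_isOpen _ N₀.toOpenSubgroup.isOpen).preimage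
          (continuous_inv.mul continuous_const))
      · exact Subgroup.isClosed_of_isOpen _
          (Subgroup.isOpen_mono (hNle (N₀ ⊓ M)) (N₀ ⊓ M).toOpenSubgroup.isOpen)
    haveI : Nonempty (OpenNormalSubgroup G) := ⟨N₀⟩
    obtain ⟨q, hq⟩ := IsCompact.nonempty_iInter_of_directed_nonempty_isCompact_isClosed D hdir hne
      (fun M => (hDclosed M).isCompact) hDclosed
    have hqD : ∀ M : OpenNormalSubgroup G, q ∈ D M := Set.mem_iInter.mp hq
    have hqQs : q ∈ Qs := by
      rw [hQsdef]
      refine Subgroup.mem_iInf.mpr fun A => ?_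
      exact hmono (hinf2 A) (hqD A).2
    have hqy : QuotientGroup.mk' (N₀ : Subgroup G) q = y := (hqD N₀).1
    exact Subgroup.mem_map.mpr ⟨q, hQP ▸ hqQs, hqy⟩
  have hPeq : P.map (QuotientGroup.mk' (N₀ : Subgroup G)) = ((σ N₀) : Subgroup _) :=
    le_antisymm (hσP N₀) hsurj
  constructor
  · rw [hPeq]; exact (σ N₀).isPGroup'
  · rw [hPeq]
    haveI : ((σ N₀ : Sylow p (G ⧸ (N₀ : Subgroup G))) :
        Subgroup (G ⧸ (N₀ : Subgroup G))).FiniteIndex := ⟨Subgroup.index_ne_zero_of_finite⟩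
    exact Sylow.not_dvd_index (σ N₀)

end PillarA


/-- **Lemma 2.2(b).** Let `G` be a profinite group, `p` a prime and `P` a `p`-Sylow
subgroup. Let `K` be an open normal subgroup and `t ∈ P` with `Kt ∩ P ⊆ t^G`. If `K` is
an extension of a pro-`p'`-group by a pro-`p`-group, then `t` has finite order. -/
theorem isOfFinOrder_of_coset_subset_conjClass_of_extension
    {G : Type u} [Group G] [TopologicalSpace G] [IsTopologicalGroup G]
    [CompactSpace G] [T2Space G] [TotallyDisconnectedSpace G]
    (p : ℕ) (hp : p.Prime)
    (P : Subgroup G) (hP : IsSylowProP p P)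
    (K : Subgroup G) (hKopen : IsOpen (K : Set G)) (hKnorm : K.Normal)
    (t : G) (ht : t ∈ P)
    (hconj : (K : Set G) * {t} ∩ P ⊆ {y | IsConj t y})
    (R : Subgroup K) (hRclosed : IsClosed (R : Set K)) (hRnorm : R.Normal)
    (hRp' : IsProPPrimeGroup p R) (hquot : IsProPGroup p (K ⧸ R)) :
    IsOfFinOrder t := by
  haveI : Fact p.Prime := ⟨hp⟩
  classical
  set m := K.index with hm
  haveI hKfin : Finite (G ⧸ K) := Subgroup.quotient_finite_of_isOpen K hKopen
  have hmne : m ≠ 0 := Subgroup.index_ne_zero_of_finite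
  have key : ∀ N : OpenNormalSubgroup G, (N : Subgroup G) ≤ K → t ^ (Nat.factorial m) ∈ (N : Subgroup G) := by
    intro N hNK
    set π := QuotientGroup.mk' (N : Subgroup G) with hπ
    obtain ⟨hPp, hPidx⟩ := sylow_image p P hp hP N
    set Kb := K.map π with hKb
    set Pb := P.map π with hPb
    set RG := R.map K.subtype with hRG
    set Rb := RG.map π with hRb
    haveI hKbn : Kb.Normal := hKnorm.map π (QuotientGroup.mk'_surjective _)
    have h1 : Rb ≤ Kb := Subgroup.map_mono (by rw [hRG]; exact Subgroup.map_subtype_le R)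
    have h2 : ∀ kb ∈ Kb, ∀ rb ∈ Rb, kb * rb * kb⁻¹ ∈ Rb := by
      intro kb hkb rb hrb
      obtain ⟨k, hk, rfl⟩ := Subgroup.mem_map.mp hkb
      obtain ⟨rg, hrg, rfl⟩ := Subgroup.mem_map.mp hrb
      rw [hRG] at hrg
      obtain ⟨r0, hr0, rfl⟩ := Subgroup.mem_map.mp hrg
      have hconjmem : (⟨k, hk⟩ : K) * r0 * (⟨k, hk⟩ : K)⁻¹ ∈ R := hRnorm.conj_mem r0 hr0 _
      have hin : k * (K.subtype r0) * k⁻¹ ∈ RG := by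
        rw [hRG]
        exact Subgroup.mem_map.mpr ⟨_, hconjmem, rfl⟩
      have he : π k * π (K.subtype r0) * (π k)⁻¹ = π (k * K.subtype r0 * k⁻¹) := by
        rw [map_mul, map_mul, map_inv]
      rw [he]
      exact Subgroup.mem_map.mpr ⟨_, hin, rfl⟩
    have hWn : ((N : Subgroup G).comap (K.subtype.comp R.subtype)).Normal :=
      Subgroup.Normal.comap inferInstance _
    have hWo : IsOpen (((N : Subgroup G).comap (K.subtype.comp R.subtype) : Subgroup R) : Set R) := by
      rw [Subgroup.coe_comap]
      exact N.toOpenSubgroup.isOpen.preimage (continuous_subtype_val.comp continuous_subtype_val)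
    have h3 : ¬ p ∣ Nat.card Rb := by
      have hcop : Nat.Coprime p ((N : Subgroup G).comap (K.subtype.comp R.subtype)).index :=
        hRp' _ hWn hWo
      have h3' : ¬ p ∣ ((N : Subgroup G).comap (K.subtype.comp R.subtype)).index :=
        (hp.coprime_iff_not_dvd).mp hcop
      have hker : (π.comp (K.subtype.comp R.subtype)).ker
          = (N : Subgroup G).comap (K.subtype.comp R.subtype) := by
        rw [hπ]
        ext z
        simp [MonoidHom.mem_ker, QuotientGroup.eq_one_iff]
      have hrange : (π.comp (K.subtype.comp R.subtype)).range = Rb := by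
        rw [hRb, hRG, MonoidHom.range_comp, MonoidHom.range_comp, Subgroup.range_subtype]
      have hidx : ((N : Subgroup G).comap (K.subtype.comp R.subtype)).index = Nat.card Rb := by
        rw [← hker, Subgroup.index_ker, hrange]
      rwa [hidx] at h3'
    set V : Subgroup (K ⧸ R) := ((N : Subgroup G).comap K.subtype).map (QuotientGroup.mk' R)
      with hV
    have hVn : V.Normal :=
      Subgroup.Normal.map (Subgroup.Normal.comap inferInstance _) _
        (QuotientGroup.mk'_surjective R)
    have hVo : IsOpen (V : Set (K ⧸ R)) := by
      rw [hV, Subgroup.coe_map]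
      refine QuotientGroup.isOpenMap_coe _ ?_
      rw [Subgroup.coe_comap]
      exact N.toOpenSubgroup.isOpen.preimage continuous_subtype_val
    obtain ⟨nV, hnV⟩ := hquot V hVn hVo
    haveI : Finite ((K ⧸ R) ⧸ V) := Nat.finite_of_card_ne_zero
      (by rw [← Subgroup.index_eq_card, hnV]; exact pow_ne_zero _ hp.pos.ne')
    have h4 : ∀ x ∈ Kb, ∃ j : ℕ, x ^ p ^ j ∈ Rb := by
      intro x hx
      rw [hKb] at hx
      obtain ⟨k, hk, rfl⟩ := Subgroup.mem_map.mp hx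
      refine ⟨nV, ?_⟩
      have ho : orderOf ((QuotientGroup.mk' V) ((QuotientGroup.mk' R) (⟨k, hk⟩ : K))) ∣ p ^ nV := by
        rw [← hnV, Subgroup.index_eq_card]
        exact orderOf_dvd_natCard _
      have hpow : ((QuotientGroup.mk' V) ((QuotientGroup.mk' R) (⟨k, hk⟩ : K))) ^ p ^ nV = 1 :=
        orderOf_dvd_iff_pow_eq_one.mp ho
      rw [← map_pow, ← map_pow] at hpow
      have hmemV : (QuotientGroup.mk' R) ((⟨k, hk⟩ : K) ^ p ^ nV) ∈ V := by
        rwa [← MonoidHom.mem_ker, QuotientGroup.ker_mk'] at hpow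
      rw [hV] at hmemV
      obtain ⟨w, hw, hweq⟩ := Subgroup.mem_map.mp hmemV
      obtain ⟨r0, hr0, hr0eq⟩ := (QuotientGroup.mk'_eq_mk' R).mp hweq
      have hkval : k ^ p ^ nV = (w : G) * (K.subtype r0) := by
        have hc := congrArg K.subtype hr0eq
        simpa using hc.symm
      have hwN : π (w : G) = 1 := (QuotientGroup.eq_one_iff _).mpr hw
      rw [← map_pow, hkval, map_mul, hwN, one_mul]
      rw [hRb]
      exact Subgroup.mem_map.mpr ⟨_, by rw [hRG]; exact Subgroup.mem_map.mpr ⟨r0, hr0, rfl⟩, rfl⟩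
    have h5 : ∀ s ∈ Pb ⊓ Kb, IsConj (π t) (s * π t) := by
      intro s hs
      obtain ⟨hsP, hsK⟩ := hs
      rw [hPb] at hsP
      obtain ⟨s₀, hs₀, rfl⟩ := Subgroup.mem_map.mp hsP
      rw [hKb] at hsK
      obtain ⟨k, hk, hkeq⟩ := Subgroup.mem_map.mp hsK
      have hks : k⁻¹ * s₀ ∈ (N : Subgroup G) := by
        have hone : π (k⁻¹ * s₀) = 1 := by
          rw [map_mul, map_inv, hkeq]
          group
        exact (QuotientGroup.eq_one_iff _).mp hone
      have hs₀K : s₀ ∈ K := by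
        have hmm := K.mul_mem hk (hNK hks)
        have : k * (k⁻¹ * s₀) = s₀ := by group
        rwa [this] at hmm
      have hstP : s₀ * t ∈ (K : Set G) * {t} ∩ (P : Set G) := by
        constructor
        · exact Set.mul_mem_mul hs₀K rfl
        · exact P.mul_mem hs₀ ht
      have hc := hconj hstP
      have hmapped := π.map_isConj hc
      rwa [map_mul] at hmapped
    have htPb : π t ∈ Pb := by rw [hPb]; exact Subgroup.mem_map.mpr ⟨t, ht, rfl⟩
    have h6 : orderOf (π t) ≤ Kb.index :=
      finiteL hp Kb Pb Rb hPp hPidx h1 h2 h3 h4 (π t) htPb h5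
    have h7 : Kb.index = m := by
      rw [hKb, hm]
      exact Subgroup.index_map_eq K (QuotientGroup.mk'_surjective _)
        (by rw [QuotientGroup.ker_mk']; exact hNK)
    have h8 : orderOf (π t) ∣ (Nat.factorial m) := Nat.dvd_factorial (orderOf_pos _) (h7 ▸ h6)
    have h9 : (π t) ^ (Nat.factorial m) = 1 := orderOf_dvd_iff_pow_eq_one.mp h8
    rw [← map_pow] at h9
    exact (QuotientGroup.eq_one_iff _).mp h9
  refine isOfFinOrder_iff_pow_eq_one.mpr ⟨(Nat.factorial m), Nat.factorial_pos m, ?_⟩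
  by_contra hne
  have h1mem : (1 : G) ∈ ({t ^ (Nat.factorial m)}ᶜ : Set G) := by
    simp only [Set.mem_compl_iff, Set.mem_singleton_iff]
    exact fun h => hne h.symm
  obtain ⟨N₀, hN₀⟩ := exists_ons_subset isOpen_compl_singleton h1mem
  set NK : OpenNormalSubgroup G := ⟨⟨K, hKopen⟩, hKnorm⟩ with hNK
  have hkey := key (N₀ ⊓ NK) (fun x hx => hx.2)
  have hmem0 : t ^ (Nat.factorial m) ∈ (N₀ : Set G) := hkey.1
  exact (hN₀ hmem0) rfl
end

section
/- Let G be a profinite group, K an open normal subgroup of G, and t ∈ G such that Kt ⊆ t^G. Then the centralizer C_G(t) is finite of order at most the index |G : K|; in particular, t has finite order. -/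
open scoped Pointwise

universe u

section Aux

/-- Counting lemma in a finite group: if the coset `Kb * s` is inside the conjugacy class
of `s`, then the centralizer of `s` has order at most the index of `Kb`. -/
lemma aux_card_centralizer_le {Q : Type*} [Group Q] [Finite Q] (Kb : Subgroup Q) (s : Q)
    (h : (Kb : Set Q) * {s} ⊆ {y | IsConj s y}) :
    Nat.card (Subgroup.centralizer {s} : Subgroup Q) ≤ Kb.index := by
  classical
  have horb : {y | IsConj s y} = MulAction.orbit (ConjAct Q) s := by
    ext y
    rw [Set.mem_setOf_eq, isConj_comm, ← ConjAct.mem_orbit_conjAct]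
  have hcardcos : Nat.card ((Kb : Set Q) * {s} : Set Q) = Nat.card Kb := by
    rw [Set.mul_singleton]
    rw [Nat.card_image_of_injective (mul_left_injective s)]
    rfl
  have hOS : Nat.card (MulAction.orbit (ConjAct Q) s) *
      Nat.card (MulAction.stabilizer (ConjAct Q) s) = Nat.card Q := by
    have := Nat.card_congr (MulAction.orbitProdStabilizerEquivGroup (ConjAct Q) s)
    rwa [Nat.card_prod] at this
  have hcent : Nat.card (Subgroup.centralizer ({s} : Set Q)) =
      Nat.card (MulAction.stabilizer (ConjAct Q) s) :=
    Subgroup.nat_card_centralizer_nat_card_stabilizer s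
  have hsub : Nat.card Kb ≤ Nat.card (MulAction.orbit (ConjAct Q) s) := by
    rw [← hcardcos, Nat.card_coe_set_eq, Nat.card_coe_set_eq]
    exact Set.ncard_le_ncard (horb ▸ h) (Set.toFinite _)
  have hpos : 0 < Nat.card Kb := Nat.card_pos
  have hKidx : Nat.card Kb * Kb.index = Nat.card Q := Kb.card_mul_index
  have hm : Nat.card Kb * Nat.card (Subgroup.centralizer ({s} : Set Q)) ≤
      Nat.card Kb * Kb.index := by
    calc Nat.card Kb * Nat.card (Subgroup.centralizer ({s} : Set Q))
        ≤ Nat.card (MulAction.orbit (ConjAct Q) s) *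
            Nat.card (Subgroup.centralizer ({s} : Set Q)) := Nat.mul_le_mul_right _ hsub
      _ = Nat.card Q := by rw [hcent, hOS]
      _ = Nat.card Kb * Kb.index := hKidx.symm
  exact Nat.le_of_mul_le_mul_left hm hpos

variable {G : Type u} [Group G] [TopologicalSpace G] [IsTopologicalGroup G]
    [CompactSpace G] [T2Space G] [TotallyDisconnectedSpace G]

/-- Separation in a profinite group: an open normal subgroup avoiding a nontrivial element. -/
lemma aux_exists_open_normal {g : G} (hg : g ≠ 1) :
    ∃ N : Subgroup G, N.Normal ∧ IsOpen (N : Set G) ∧ g ∉ N := by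
  obtain ⟨V, hV, h1V, hVc⟩ := compact_exists_isClopen_in_isOpen
    (isOpen_compl_singleton (x := g)) (by simpa using hg.symm)
  obtain ⟨N, hN⟩ := IsTopologicalGroup.exist_openNormalSubgroup_sub_clopen_nhds_of_one hV h1V
  exact ⟨N.toSubgroup, N.isNormal', N.toOpenSubgroup.isOpen, fun h => hVc (hN h) rfl⟩

lemma aux_exists_open_normal_finset (D : Finset G) :
    ∃ N : Subgroup G, N.Normal ∧ IsOpen (N : Set G) ∧ ∀ d ∈ D, d ≠ 1 → d ∉ N := by
  classical
  induction D using Finset.induction_on with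
  | empty => exact ⟨⊤, inferInstance, by simp, by simp⟩
  | @insert a D ha ih =>
    obtain ⟨N, hNn, hNo, hND⟩ := ih
    by_cases h1 : a = 1
    · exact ⟨N, hNn, hNo, fun d hd hd1 => by
        rcases Finset.mem_insert.mp hd with rfl | hd
        · exact absurd h1 hd1
        · exact hND d hd hd1⟩
    · obtain ⟨M, hMn, hMo, hMa⟩ := aux_exists_open_normal h1
      refine ⟨N ⊓ M, ?_, ?_, ?_⟩
      · exact ⟨fun n hn g => ⟨hNn.conj_mem n hn.1 g, hMn.conj_mem n hn.2 g⟩⟩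
      · rw [Subgroup.coe_inf]; exact hNo.inter hMo
      · intro d hd hd1 hdm
        rcases Finset.mem_insert.mp hd with rfl | hd
        · exact hMa hdm.2
        · exact hND d hd hd1 hdm.1

/-- The bound in a finite quotient by an open normal subgroup. -/
lemma aux_quot (K : Subgroup G) (hKidx : K.index ≠ 0) (t : G)
    (hconj : (K : Set G) * {t} ⊆ {y | IsConj t y})
    (N : Subgroup G) (hNn : N.Normal) (hNo : IsOpen (N : Set G)) :
    haveI := hNn
    Nat.card (Subgroup.centralizer {(QuotientGroup.mk' N) t} : Subgroup (G ⧸ N)) ≤ K.index := by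
  haveI := hNn
  haveI : Finite (G ⧸ N) := N.quotient_finite_of_isOpen hNo
  set π := QuotientGroup.mk' N with hπ
  have hmap : ((K.map π : Subgroup (G ⧸ N)) : Set (G ⧸ N)) * {π t} ⊆ {y | IsConj (π t) y} := by
    rintro y ⟨x, hx, z, hz, rfl⟩
    rcases hz with rfl
    rcases hx with ⟨k, hk, rfl⟩
    have hkt : IsConj t (k * t) := hconj (Set.mul_mem_mul hk rfl)
    have := π.map_isConj hkt
    simpa [map_mul] using this
  refine (aux_card_centralizer_le (K.map π) (π t) hmap).trans ?_
  have hidx : (K.map π).index = (K ⊔ N).index := by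
    rw [Subgroup.index_map, QuotientGroup.ker_mk',
      MonoidHom.range_eq_top.mpr (QuotientGroup.mk'_surjective N), Subgroup.index_top, mul_one]
  rw [hidx]
  exact Nat.le_of_dvd (Nat.pos_of_ne_zero hKidx) (Subgroup.index_dvd_of_le le_sup_left)

end Aux

/-- Let `G` be a profinite group, `K` an open normal subgroup and `t ∈ G` with
`Kt ⊆ t^G`. Then the centralizer of `t` in `G` is finite of order at most `|G : K|`;
in particular `t` has finite order. -/
theorem centralizer_finite_of_coset_subset_conjClass
    {G : Type u} [Group G] [TopologicalSpace G] [IsTopologicalGroup G]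
    [CompactSpace G] [T2Space G] [TotallyDisconnectedSpace G]
    (K : Subgroup G) (hKopen : IsOpen (K : Set G)) (hKnorm : K.Normal)
    (t : G) (hconj : (K : Set G) * {t} ⊆ {y | IsConj t y}) :
    ((Subgroup.centralizer {t} : Subgroup G) : Set G).Finite ∧
      Nat.card (Subgroup.centralizer {t} : Subgroup G) ≤ K.index ∧
      IsOfFinOrder t := by
  classical
  haveI : Finite (G ⧸ K) := K.quotient_finite_of_isOpen hKopen
  have hKidx : K.index ≠ 0 := Subgroup.index_ne_zero_of_finite
  set n := K.index with hn
  -- Step 1: every finite subset of the centralizer has at most `n` elements.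
  have hbound : ∀ S : Finset G,
      ↑S ⊆ ((Subgroup.centralizer {t} : Subgroup G) : Set G) → S.card ≤ n := by
    intro S hS
    obtain ⟨N, hNn, hNo, hND⟩ :=
      aux_exists_open_normal_finset ((S ×ˢ S).image fun p => p.1⁻¹ * p.2)
    haveI := hNn
    haveI : Finite (G ⧸ N) := N.quotient_finite_of_isOpen hNo
    set π := QuotientGroup.mk' N with hπ
    have hinj : Set.InjOn π ↑S := by
      intro x hx y hy hxy
      by_contra hne
      have hmem : x⁻¹ * y ∈ (S ×ˢ S).image (fun p => p.1⁻¹ * p.2) :=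
        Finset.mem_image.mpr ⟨(x, y), Finset.mk_mem_product hx hy, rfl⟩
      have h1 : x⁻¹ * y ≠ 1 := fun h => hne (inv_mul_eq_one.mp h)
      exact hND _ hmem h1 (QuotientGroup.eq.mp hxy)
    have himage : (S.image π).card = S.card := Finset.card_image_of_injOn hinj
    have hsubset : ↑(S.image π) ⊆
        ((Subgroup.centralizer {π t} : Subgroup (G ⧸ N)) : Set (G ⧸ N)) := by
      intro y hy
      simp only [Finset.coe_image, Set.mem_image, Finset.mem_coe] at hy
      obtain ⟨x, hx, rfl⟩ := hy
      have hx' : x ∈ Subgroup.centralizer ({t} : Set G) := hS hx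
      have hxc : x * t = t * x := Subgroup.mem_centralizer_singleton_iff.mp hx'
      rw [SetLike.mem_coe, Subgroup.mem_centralizer_singleton_iff,
        ← map_mul, ← map_mul, hxc]
    have hcard1 : (S.image π).card ≤
        Nat.card (Subgroup.centralizer {π t} : Subgroup (G ⧸ N)) := by
      have h2 := Set.ncard_le_ncard hsubset (Set.toFinite _)
      rw [Set.ncard_coe_finset] at h2
      have h3 : ((Subgroup.centralizer {π t} : Subgroup (G ⧸ N)) : Set (G ⧸ N)).ncard =
          Nat.card (Subgroup.centralizer {π t} : Subgroup (G ⧸ N)) := by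
        rw [← Nat.card_coe_set_eq]; rfl
      rwa [h3] at h2
    calc S.card = (S.image π).card := himage.symm
      _ ≤ _ := hcard1
      _ ≤ n := aux_quot K hKidx t hconj N hNn hNo
  -- Step 2: finiteness of the centralizer.
  have hfin : ((Subgroup.centralizer {t} : Subgroup G) : Set G).Finite := by
    by_contra h
    obtain ⟨s, hs_sub, hsfin, hscard⟩ :=
      (show Set.Infinite _ from h).exists_subset_ncard_eq (n + 1)
    have hb := hbound hsfin.toFinset (by rw [Set.Finite.coe_toFinset]; exact hs_sub)
    rw [← Set.ncard_eq_toFinset_card s hsfin, hscard] at hb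
    exact Nat.not_succ_le_self n hb
  -- Step 3: cardinality bound.
  have hcard : Nat.card (Subgroup.centralizer {t} : Subgroup G) ≤ n := by
    have h3 : Nat.card (Subgroup.centralizer {t} : Subgroup G) =
        ((Subgroup.centralizer {t} : Subgroup G) : Set G).ncard := by
      rw [← Nat.card_coe_set_eq]; rfl
    rw [h3, Set.ncard_eq_toFinset_card _ hfin]
    exact hbound hfin.toFinset (by rw [Set.Finite.coe_toFinset])
  -- Step 4: finite order.
  have hord : t ^ n.factorial = 1 := by
    by_contra hx
    obtain ⟨N, hNn, hNo, hxN⟩ := aux_exists_open_normal hx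
    haveI := hNn
    haveI : Finite (G ⧸ N) := N.quotient_finite_of_isOpen hNo
    set s := (QuotientGroup.mk' N) t with hs
    have h1 : orderOf s ∣ Nat.card (Subgroup.centralizer {s} : Subgroup (G ⧸ N)) := by
      rw [← Nat.card_zpowers]
      exact Subgroup.card_dvd_of_le
        (Subgroup.zpowers_le.mpr (Subgroup.mem_centralizer_singleton_iff.mpr rfl))
    have h2 := aux_quot K hKidx t hconj N hNn hNo
    have h3 : orderOf s ≤ n := (Nat.le_of_dvd Nat.card_pos h1).trans h2
    have h4 : orderOf s ∣ n.factorial := Nat.dvd_factorial (orderOf_pos s) h3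
    have h5 : s ^ n.factorial = 1 := orderOf_dvd_iff_pow_eq_one.mp h4
    rw [hs, ← map_pow] at h5
    exact hxN ((QuotientGroup.eq_one_iff _).mp h5)
  exact ⟨hfin, hcard, isOfFinOrder_iff_pow_eq_one.mpr ⟨n.factorial, n.factorial_pos, hord⟩⟩
end

section
/- Let I be an infinite set of primes and let A be the Cartesian product over p ∈ I of non-trivial procyclic p-groups A_p. Then A contains a family of at least 2^ℵ₀ elements of infinite order such that the closed subgroups topologically generated by any two distinct members of the family are non-isomorphic as topological groups; in particular, A has at least 2^ℵ₀ conjugacy classes of elements of infinite order. -/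
open scoped Pointwise

universe u

section Helpers

variable {H : Type*} [Group H] [TopologicalSpace H] [IsTopologicalGroup H]
  [CompactSpace H] [T2Space H] [TotallyDisconnectedSpace H]

lemma my_exists_openNormal_sub {V : Set H} (hV : IsOpen V) (h1 : (1 : H) ∈ V) :
    ∃ N : Subgroup H, N.Normal ∧ IsOpen (N : Set H) ∧ (N : Set H) ⊆ V := by
  obtain ⟨W, hW, h1W, hWV⟩ := compact_exists_isClopen_in_isOpen hV h1
  obtain ⟨N, hN⟩ := IsTopologicalGroup.exist_openNormalSubgroup_sub_clopen_nhds_of_one hW h1W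
  exact ⟨N.toSubgroup, N.isNormal', N.toOpenSubgroup.isOpen', hN.trans hWV⟩

lemma my_exists_proper_openNormal [Nontrivial H] :
    ∃ N : Subgroup H, N.Normal ∧ IsOpen (N : Set H) ∧ N ≠ ⊤ := by
  obtain ⟨a, ha⟩ := exists_ne (1 : H)
  obtain ⟨N, h1, h2, h3⟩ := my_exists_openNormal_sub (isOpen_compl_singleton (x := a))
    (by simpa using ha.symm)
  refine ⟨N, h1, h2, fun e => ?_⟩
  exact (h3 (by rw [e]; trivial) : a ∈ ({a}ᶜ : Set H)) rfl

lemma my_prime_eq_of_dvd_orderOf {p : ℕ} (hp : p.Prime) (hH : IsProPGroup p H)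
    {g : H} {q : ℕ} (hq : q.Prime) (hdvd : q ∣ orderOf g) (hfin : orderOf g ≠ 0) :
    q = p := by
  set h := g ^ (orderOf g / q) with hh
  have hoh : orderOf h = q := orderOf_pow_orderOf_div hfin hdvd
  have hne : h ≠ 1 := by
    intro e
    rw [e, orderOf_one] at hoh
    exact hq.one_lt.ne' hoh.symm
  obtain ⟨N, hNnorm, hNopen, hNsub⟩ := my_exists_openNormal_sub
    (isOpen_compl_singleton (x := h)) (by simpa using hne.symm)
  have hhN : h ∉ N := fun hmem => (hNsub hmem) rfl
  obtain ⟨n, hn⟩ := hH N hNnorm hNopen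
  haveI : N.Normal := hNnorm
  have hq1 : ((h : H) : H ⧸ N) ≠ 1 := by
    rwa [ne_eq, QuotientGroup.eq_one_iff]
  have hdvdq : orderOf ((h : H) : H ⧸ N) ∣ q := hoh ▸ orderOf_map_dvd (QuotientGroup.mk' N) h
  have hoq : orderOf ((h : H) : H ⧸ N) = q :=
    ((Nat.dvd_prime hq).mp hdvdq).resolve_left (by simpa [orderOf_eq_one_iff] using hq1)
  have hcard : orderOf ((h : H) : H ⧸ N) ∣ Nat.card (H ⧸ N) := orderOf_dvd_natCard _
  have : q ∣ p ^ n := by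
    rw [← hn]
    rw [hoq] at hcard
    exact hcard
  exact (Nat.prime_dvd_prime_iff_eq hq hp).mp (hq.dvd_of_dvd_pow this)

end Helpers


section ProdLemmas

variable {I : Set ℕ} {A : I → Type u} [∀ p, Group (A p)] [∀ p, TopologicalSpace (A p)]
    [∀ p, IsTopologicalGroup (A p)] [∀ p, CompactSpace (A p)] [∀ p, T2Space (A p)]
    [∀ p, TotallyDisconnectedSpace (A p)]

lemma my_closure_coprime (hprimes : ∀ p ∈ I, Nat.Prime p)
    (hpro : ∀ p : I, IsProPGroup (p : ℕ) (A p))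
    (x : Π p : I, A p) (i : I) (hxi : x i = 1)
    (U : Subgroup ((Subgroup.zpowers x).topologicalClosure))
    (hUn : U.Normal) (hUo : IsOpen (U : Set ((Subgroup.zpowers x).topologicalClosure))) :
    Nat.Coprime (i : ℕ) U.index := by
  classical
  have hHker : ∀ h : (Subgroup.zpowers x).topologicalClosure, (h : Π p : I, A p) i = 1 := by
    have hker : (Subgroup.zpowers x).topologicalClosure ≤ (Pi.evalMonoidHom (fun p : I => A p) i).ker := by
      apply Subgroup.topologicalClosure_minimal
      · rw [Subgroup.zpowers_le]
        exact hxi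
      · have : ((Pi.evalMonoidHom (fun p : I => A p) i).ker : Set (Π p : I, A p)) =
            (fun g : Π p : I, A p => g i) ⁻¹' {1} := by
          ext g; simp [MonoidHom.mem_ker, Pi.evalMonoidHom]
        rw [this]
        exact IsClosed.preimage (continuous_apply i) isClosed_singleton
    intro h
    exact hker h.2
  -- U is the preimage of an open set
  obtain ⟨V, hVopen, hVpre⟩ := isOpen_induced_iff.mp hUo
  have h1V : (1 : Π p : I, A p) ∈ V := by
    have : ((1 : (Subgroup.zpowers x).topologicalClosure) : Π p : I, A p) ∈ V := by
      rw [← Set.mem_preimage, hVpre]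
      exact U.one_mem
    simpa using this
  obtain ⟨F, uset, hF, hsub⟩ := isOpen_pi_iff.mp hVopen 1 h1V
  -- choose open normal subgroups
  have hWex : ∀ j : I, ∃ N : Subgroup (A j), N.Normal ∧ IsOpen (N : Set (A j)) ∧
      (j ∈ F → (N : Set (A j)) ⊆ uset j) := by
    intro j
    by_cases hj : j ∈ F
    · obtain ⟨N, h1, h2, h3⟩ := my_exists_openNormal_sub (hF j hj).1 (by
        simpa using (hF j hj).2)
      exact ⟨N, h1, h2, fun _ => h3⟩
    · exact ⟨⊤, inferInstance, by simp, fun h => absurd h hj⟩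
  choose W hWnorm hWopen hWsub using hWex
  haveI : ∀ j : I, (W j).Normal := hWnorm
  set F' := F.erase i with hF'def
  -- the homomorphism to the product of quotients
  let ψ : (Subgroup.zpowers x).topologicalClosure →* (∀ j : F', A j.1 ⧸ W j.1) :=
    { toFun := fun h j => ((h : Π p : I, A p) j.1 : A j.1 ⧸ W j.1)
      map_one' := by funext j; simp
      map_mul' := by intro a b; funext j; simp }
  have hker : ψ.ker ≤ U := by
    intro h hh
    have hmem : ∀ j ∈ F, (h : Π p : I, A p) j ∈ W j := by
      intro j hj
      by_cases hji : j = i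
      · subst hji
        rw [hHker h]
        exact (W j).one_mem
      · have hjF' : j ∈ F' := Finset.mem_erase.mpr ⟨hji, hj⟩
        have := congrFun (MonoidHom.mem_ker.mp hh) ⟨j, hjF'⟩
        exact (QuotientGroup.eq_one_iff _).mp this
    have hhV : (h : Π p : I, A p) ∈ V := by
      apply hsub
      rw [Set.mem_pi]
      intro j hj
      exact hWsub j hj (hmem j hj)
    rw [← SetLike.mem_coe, ← hVpre]
    exact hhV
  have hdvd1 : U.index ∣ ψ.ker.index := Subgroup.index_dvd_of_le hker
  have hdvd2 : ψ.ker.index ∣ Nat.card (∀ j : F', A j.1 ⧸ W j.1) := by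
    rw [Subgroup.index_ker]
    exact Subgroup.card_subgroup_dvd_card _
  have hcop : Nat.Coprime (i : ℕ) (Nat.card (∀ j : F', A j.1 ⧸ W j.1)) := by
    rw [Nat.card_pi]
    apply Nat.Coprime.prod_right
    intro j _
    have hcardeq : Nat.card (A j.1 ⧸ W j.1) = (W j.1).index := rfl
    obtain ⟨n, hn⟩ := hpro j.1 (W j.1) (hWnorm j.1) (hWopen j.1)
    rw [hcardeq, hn]
    have hji : (j.1 : ℕ) ≠ (i : ℕ) := by
      intro e
      exact (Finset.mem_erase.mp j.2).1 (Subtype.ext e)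
    exact Nat.Coprime.pow_right n
      ((Nat.coprime_primes (hprimes i i.2) (hprimes j.1 j.1.2)).mpr (Ne.symm hji))
  exact Nat.Coprime.coprime_dvd_right (hdvd1.trans hdvd2) hcop

end ProdLemmas


section ProdLemmas2

variable {I : Set ℕ} {A : I → Type u} [∀ p, Group (A p)] [∀ p, TopologicalSpace (A p)]
    [∀ p, IsTopologicalGroup (A p)] [∀ p, CompactSpace (A p)] [∀ p, T2Space (A p)]
    [∀ p, TotallyDisconnectedSpace (A p)]

lemma my_exists_openNormal_index_dvd (hpro : ∀ p : I, IsProPGroup (p : ℕ) (A p))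
    [∀ p, Nontrivial (A p)]
    (x : Π p : I, A p) (i : I)
    (hgen : (Subgroup.zpowers (x i)).topologicalClosure = ⊤) :
    ∃ U : Subgroup ((Subgroup.zpowers x).topologicalClosure),
      U.Normal ∧ IsOpen (U : Set ((Subgroup.zpowers x).topologicalClosure)) ∧
        (i : ℕ) ∣ U.index := by
  classical
  let φ : ((Subgroup.zpowers x).topologicalClosure : Subgroup (Π p : I, A p)) →* A i :=
    (Pi.evalMonoidHom (fun p : I => A p) i).comp
      ((Subgroup.zpowers x).topologicalClosure).subtype
  have hφc : Continuous φ := (continuous_apply i).comp continuous_subtype_val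
  haveI : CompactSpace ((Subgroup.zpowers x).topologicalClosure) :=
    isCompact_iff_compactSpace.mp
      ((Subgroup.isClosed_topologicalClosure _).isCompact)
  have hφs : Function.Surjective φ := by
    rw [← MonoidHom.range_eq_top]
    have hclosed : IsClosed (φ.range : Set (A i)) := by
      have : (φ.range : Set (A i)) = Set.range ⇑φ := by
        ext a; simp [MonoidHom.mem_range]
      rw [this]
      exact (isCompact_range hφc).isClosed
    have hle : (Subgroup.zpowers (x i)).topologicalClosure ≤ φ.range := by
      apply Subgroup.topologicalClosure_minimal _ _ hclosed
      rw [Subgroup.zpowers_le]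
      exact ⟨⟨x, Subgroup.le_topologicalClosure _ (Subgroup.mem_zpowers x)⟩, rfl⟩
    rw [hgen] at hle
    exact top_le_iff.mp hle
  obtain ⟨N, hNnorm, hNopen, hNne⟩ := my_exists_proper_openNormal (H := A i)
  obtain ⟨n, hn⟩ := hpro i N hNnorm hNopen
  have hn0 : n ≠ 0 := by
    intro e
    rw [e, pow_zero] at hn
    exact hNne (Subgroup.index_eq_one.mp hn)
  refine ⟨N.comap φ, hNnorm.comap φ, ?_, ?_⟩
  · rw [Subgroup.coe_comap]
    exact hNopen.preimage hφc
  · rw [Subgroup.index_comap_of_surjective N hφs, hn]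
    exact dvd_pow_self _ hn0

lemma my_no_iso (hprimes : ∀ p ∈ I, Nat.Prime p)
    (hpro : ∀ p : I, IsProPGroup (p : ℕ) (A p)) [∀ p, Nontrivial (A p)]
    (x y : Π p : I, A p) (i : I)
    (hx : (Subgroup.zpowers (x i)).topologicalClosure = ⊤) (hy : y i = 1) :
    ¬ ∃ e : (Subgroup.zpowers x).topologicalClosure ≃*
        (Subgroup.zpowers y).topologicalClosure, Continuous e ∧ Continuous e.symm := by
  rintro ⟨e, _, hesc⟩
  obtain ⟨U, hUn, hUo, hUdvd⟩ := my_exists_openNormal_index_dvd hpro x i hx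
  have hU'n : (U.comap e.symm.toMonoidHom).Normal := hUn.comap _
  have hU'o : IsOpen ((U.comap e.symm.toMonoidHom : Subgroup _) :
      Set ((Subgroup.zpowers y).topologicalClosure)) := by
    rw [Subgroup.coe_comap]
    exact hUo.preimage (by simpa using hesc)
  have hidx : (U.comap e.symm.toMonoidHom).index = U.index :=
    Subgroup.index_comap_of_surjective U e.symm.surjective
  have hcop := my_closure_coprime hprimes hpro y i hy _ hU'n hU'o
  rw [hidx] at hcop
  have : (i : ℕ) ∣ 1 := hcop ▸ Nat.dvd_gcd dvd_rfl hUdvd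
  exact (hprimes i i.2).ne_one (Nat.dvd_one.mp this)

lemma my_a_comm (hproc : ∀ p : I, ∃ g : A p, (Subgroup.zpowers g).topologicalClosure = ⊤)
    (j : I) (a b : A j) : a * b = b * a := by
  obtain ⟨g, hg⟩ := hproc j
  have hcomm : ∀ u v : (Subgroup.zpowers g), u * v = v * u := by
    intro u v
    obtain ⟨m, hm⟩ := Subgroup.mem_zpowers_iff.mp u.2
    obtain ⟨n, hn⟩ := Subgroup.mem_zpowers_iff.mp v.2
    apply Subtype.ext
    show (u : A j) * v = (v : A j) * u
    rw [← hm, ← hn]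
    exact ((Commute.refl g).zpow_zpow m n).eq
  letI := Subgroup.commGroupTopologicalClosure (Subgroup.zpowers g) hcomm
  have ha : a ∈ (Subgroup.zpowers g).topologicalClosure := by rw [hg]; trivial
  have hb : b ∈ (Subgroup.zpowers g).topologicalClosure := by rw [hg]; trivial
  have := mul_comm (⟨a, ha⟩ : (Subgroup.zpowers g).topologicalClosure) ⟨b, hb⟩
  exact congrArg Subtype.val this

end ProdLemmas2


/-- Let `I` be an infinite set of primes and `A` the Cartesian product over `p ∈ I` of
non-trivial procyclic `p`-groups `A p`. Then `A` contains a family of at least `2^ℵ₀`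
elements of infinite order whose topologically generated closed subgroups are pairwise
non-isomorphic as topological groups; in particular `A` has at least `2^ℵ₀` conjugacy
classes of elements of infinite order. -/
theorem continuum_le_conjClasses_of_prod_procyclic
    (I : Set ℕ) (hI : I.Infinite) (hprimes : ∀ p ∈ I, Nat.Prime p)
    (A : I → Type u) [∀ p, Group (A p)] [∀ p, TopologicalSpace (A p)]
    [∀ p, IsTopologicalGroup (A p)] [∀ p, CompactSpace (A p)] [∀ p, T2Space (A p)]
    [∀ p, TotallyDisconnectedSpace (A p)] [∀ p, Nontrivial (A p)]
    (hproc : ∀ p : I, ∃ x : A p, (Subgroup.zpowers x).topologicalClosure = ⊤)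
    (hpro : ∀ p : I, IsProPGroup (p : ℕ) (A p)) :
    ∃ T : Set (Π p : I, A p),
      Cardinal.continuum ≤ Cardinal.mk T ∧
      (∀ x ∈ T, ¬ IsOfFinOrder x) ∧
      (∀ x ∈ T, ∀ y ∈ T, x ≠ y →
        ¬ ∃ e : (Subgroup.zpowers x).topologicalClosure ≃*
            (Subgroup.zpowers y).topologicalClosure, Continuous e ∧ Continuous e.symm) ∧
      Cardinal.continuum ≤
        Cardinal.mk {c : ConjClasses (Π p : I, A p) | ∃ z ∈ c.carrier, ¬ IsOfFinOrder z} := by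
  classical
  haveI : Infinite I := hI.to_subtype
  -- generators
  set gen : ∀ p : I, A p := fun p => Classical.choose (hproc p) with hgendef
  have hgen : ∀ p : I, (Subgroup.zpowers (gen p)).topologicalClosure = ⊤ :=
    fun p => Classical.choose_spec (hproc p)
  have hgenne : ∀ p : I, gen p ≠ 1 := by
    intro p h1
    have h := hgen p
    rw [h1, Subgroup.zpowers_one_eq_bot] at h
    have hbot : ((⊥ : Subgroup (A p)).topologicalClosure = ⊥) :=
      le_antisymm (Subgroup.topologicalClosure_minimal _ le_rfl
        (by rw [Subgroup.coe_bot]; exact isClosed_singleton))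
        (Subgroup.le_topologicalClosure _)
    rw [hbot] at h
    exact absurd h bot_ne_top
  -- enumeration
  have e : I ≃ ℕ := Classical.choice nonempty_equiv_of_countable
  -- the coding map
  set g : Set ℕ → Set ℕ :=
    fun s => ((fun n => 2 * n) '' s) ∪ {n | n % 2 = 1} with hgdef
  have hginj : Function.Injective g := by
    have hsub : ∀ s t : Set ℕ, g s = g t → s ⊆ t := by
      intro s t h n hn
      have h2n : 2 * n ∈ g t := h ▸ Or.inl ⟨n, hn, rfl⟩
      rcases h2n with ⟨m, hm, hmeq⟩ | hodd
      · have h2 : 2 * m = 2 * n := hmeq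
        have : m = n := by omega
        rwa [← this]
      · exfalso
        have : (2 * n) % 2 = 1 := hodd
        omega
    intro s t h
    exact le_antisymm (hsub s t h) (hsub t s h.symm)
  have hodds : ({n : ℕ | n % 2 = 1}).Infinite := by
    refine Set.infinite_of_injective_forall_mem (f := fun k : ℕ => 2 * k + 1) ?_ ?_
    · intro a b hab
      have : 2 * a + 1 = 2 * b + 1 := hab
      omega
    · intro k; show (2 * k + 1) % 2 = 1; omega
  have hginf : ∀ s, (g s).Infinite := fun s => hodds.mono Set.subset_union_right
  -- the elements
  set xs : Set ℕ → (Π p : I, A p) :=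
    fun s => fun j => if (e j) ∈ g s then gen j else 1 with hxsdef
  have hxsinj : Function.Injective xs := by
    intro s t heq
    apply hginj
    ext n
    have hc := congrFun heq (e.symm n)
    simp only [hxsdef, e.apply_symm_apply] at hc
    by_cases h1 : n ∈ g s <;> by_cases h2 : n ∈ g t
    · exact iff_of_true h1 h2
    · rw [if_pos h1, if_neg h2] at hc
      exact absurd hc (hgenne _)
    · rw [if_neg h1, if_pos h2] at hc
      exact absurd hc.symm (hgenne _)
    · exact iff_of_false h1 h2
  -- infinite order
  have hxford : ∀ s : Set ℕ, ¬ IsOfFinOrder (xs s) := by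
    intro s hford
    set n := orderOf (xs s) with hn
    have hnpos : 0 < n := hford.orderOf_pos
    -- find a coordinate with large prime
    have hJinf : (Subtype.val '' (⇑e ⁻¹' (g s)) : Set ℕ).Infinite := by
      apply Set.Infinite.image (Set.injOn_of_injective Subtype.val_injective)
      apply Set.Infinite.preimage (hginf s)
      rw [e.range_eq_univ]
      exact Set.subset_univ _
    obtain ⟨b, hb, hnb⟩ := Set.infinite_iff_exists_gt.mp hJinf n
    obtain ⟨j, hj, rfl⟩ := hb
    have hcoord : xs s j = gen j := if_pos hj
    have hpow : (gen j) ^ n = 1 := by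
      have := congrFun (pow_orderOf_eq_one (xs s)) j
      rw [← hn] at this
      rw [← hcoord]
      exact this
    have hdvd : orderOf (gen j) ∣ n := orderOf_dvd_of_pow_eq_one hpow
    have hfin : orderOf (gen j) ≠ 0 := by
      intro h0
      rw [h0] at hdvd
      exact hnpos.ne' (Nat.eq_zero_of_zero_dvd hdvd)
    have hne1 : orderOf (gen j) ≠ 1 := by
      rw [ne_eq, orderOf_eq_one_iff]
      exact hgenne j
    obtain ⟨q, hqprime, hqdvd⟩ := Nat.exists_prime_and_dvd hne1
    have hqj : q = (j : ℕ) :=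
      my_prime_eq_of_dvd_orderOf (hprimes j j.2) (hpro j) hqprime hqdvd hfin
    have : (j : ℕ) ∣ n := hqj ▸ hqdvd.trans hdvd
    exact absurd (Nat.le_of_dvd hnpos this) (not_le.mpr hnb)
  -- the family
  refine ⟨Set.range xs, ?_, ?_, ?_, ?_⟩
  · -- cardinality
    have h1 : Cardinal.lift.{u} (Cardinal.mk (Set ℕ)) ≤
        Cardinal.lift.{0} (Cardinal.mk (Set.range xs)) := by
      apply Cardinal.lift_mk_le'.mpr
      exact ⟨⟨fun s => ⟨xs s, Set.mem_range_self s⟩,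
        fun s t h => hxsinj (congrArg Subtype.val h)⟩⟩
    rw [Cardinal.mk_set, Cardinal.mk_nat, Cardinal.two_power_aleph0,
      Cardinal.lift_continuum, Cardinal.lift_uzero] at h1
    exact h1
  · rintro x ⟨s, rfl⟩
    exact hxford s
  · rintro x ⟨s, rfl⟩ y ⟨t, rfl⟩ hne hiso
    have hst : g s ≠ g t := by
      intro h
      exact hne (congrArg xs (hginj h))
    have : ∃ m, (m ∈ g s ∧ m ∉ g t) ∨ (m ∈ g t ∧ m ∉ g s) := by
      by_contra hno
      push_neg at hno
      apply hst
      ext m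
      have := hno m
      tauto
    obtain ⟨m, hm⟩ := this
    set j : I := e.symm m with hjdef
    have hem : e j = m := e.apply_symm_apply m
    rcases hm with ⟨hms, hmt⟩ | ⟨hmt, hms⟩
    · have hxj : xs s j = gen j := by rw [hxsdef]; simp only [hem]; exact if_pos hms
      have hyj : xs t j = 1 := by rw [hxsdef]; simp only [hem]; exact if_neg hmt
      exact my_no_iso hprimes hpro (xs s) (xs t) j (by rw [hxj]; exact hgen j) hyj hiso
    · have hxj : xs t j = gen j := by rw [hxsdef]; simp only [hem]; exact if_pos hmt
      have hyj : xs s j = 1 := by rw [hxsdef]; simp only [hem]; exact if_neg hms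
      obtain ⟨f, hfc, hfsc⟩ := hiso
      exact my_no_iso hprimes hpro (xs t) (xs s) j (by rw [hxj]; exact hgen j) hyj
        ⟨f.symm, hfsc, by rw [MulEquiv.symm_symm]; exact hfc⟩
  · -- conjugacy classes
    have hT2 : ∀ x ∈ Set.range xs, ¬ IsOfFinOrder x := by
      rintro x ⟨s, rfl⟩; exact hxford s
    set Φ : Set.range xs → {c : ConjClasses (Π p : I, A p) | ∃ z ∈ c.carrier, ¬ IsOfFinOrder z} :=
      fun w => ⟨ConjClasses.mk w.1,
        ⟨w.1, ConjClasses.mem_carrier_iff_mk_eq.mpr rfl, hT2 w.1 w.2⟩⟩ with hΦdef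
    have hΦinj : Function.Injective Φ := by
      intro w w' h
      have hconj : IsConj w.1 w'.1 :=
        ConjClasses.mk_eq_mk_iff_isConj.mp (congrArg Subtype.val h)
      obtain ⟨c, hc⟩ := isConj_iff.mp hconj
      apply Subtype.ext
      funext j
      have hj := congrFun hc j
      have : c j * w.1 j * (c j)⁻¹ = w.1 j := by
        rw [my_a_comm hproc j (c j) (w.1 j), mul_inv_cancel_right]
      rw [← hj, ← this]
      rfl
    have h1 : Cardinal.lift.{u} (Cardinal.mk (Set ℕ)) ≤
        Cardinal.lift.{0} (Cardinal.mk
          {c : ConjClasses (Π p : I, A p) | ∃ z ∈ c.carrier, ¬ IsOfFinOrder z}) := by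
      apply Cardinal.lift_mk_le'.mpr
      refine ⟨⟨fun s => Φ ⟨xs s, Set.mem_range_self s⟩, fun s t h => ?_⟩⟩
      have := hΦinj h
      exact hxsinj (congrArg Subtype.val this)
    rw [Cardinal.mk_set, Cardinal.mk_nat, Cardinal.two_power_aleph0,
      Cardinal.lift_continuum, Cardinal.lift_uzero] at h1
    exact h1
end

section
/- Let G be a profinite group and x, y ∈ G. Then x and y are conjugate in G if and only if for every open normal subgroup M of G the images Mx and My are conjugate in the quotient group G/M. -/
open scoped Pointwise

universe u

/-- Two elements of a profinite group are conjugate if and only if their images in every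
finite quotient `G/M` by an open normal subgroup `M` are conjugate. -/
theorem isConj_iff_forall_openNormal_isConj_quotient
    {G : Type u} [Group G] [TopologicalSpace G] [IsTopologicalGroup G]
    [CompactSpace G] [T2Space G] [TotallyDisconnectedSpace G]
    (x y : G) :
    IsConj x y ↔ ∀ M : Subgroup G, IsOpen (M : Set G) → ∀ _ : M.Normal,
      IsConj (QuotientGroup.mk x : G ⧸ M) (QuotientGroup.mk y : G ⧸ M) := by
  simp only [isConj_iff]
  constructor
  · rintro ⟨c, hc⟩ M _ hM
    exact ⟨(QuotientGroup.mk c : G ⧸ M), by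
      rw [← QuotientGroup.mk_inv, ← QuotientGroup.mk_mul, ← QuotientGroup.mk_mul, hc]⟩
  · intro h
    have key : ∀ (M : Subgroup G), ∀ _ : M.Normal, ∀ _ : (∃ c : G ⧸ M, c * (QuotientGroup.mk x) * c⁻¹ = QuotientGroup.mk y),
        ∃ g : G, g * x * g⁻¹ * y⁻¹ ∈ M := by
      intro M hn hc
      obtain ⟨c, hc⟩ := hc
      obtain ⟨g, rfl⟩ := QuotientGroup.mk_surjective c
      refine ⟨g, (QuotientGroup.eq_one_iff _).1 ?_⟩
      simp only [QuotientGroup.mk_mul, QuotientGroup.mk_inv, hc, mul_inv_cancel]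
    set S : OpenNormalSubgroup G → Set G := fun M => {g | g * x * g⁻¹ * y⁻¹ ∈ M.1} with hS
    have hclosed : ∀ M : OpenNormalSubgroup G, IsClosed (S M) := by
      intro M
      have hcont : Continuous fun g : G => g * x * g⁻¹ * y⁻¹ := by continuity
      exact IsClosed.preimage hcont M.toOpenSubgroup.isClosed
    have hfin : ∀ u : Finset (OpenNormalSubgroup G),
        (Set.univ ∩ ⋂ i ∈ u, S i).Nonempty := by
      intro u
      set N : Subgroup G := ⨅ i ∈ u, (i : OpenNormalSubgroup G).1 with hN
      have hNopen : IsOpen (N : Set G) := by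
        have hEq : (N : Set G) = ⋂ i ∈ u, ((i : OpenNormalSubgroup G).1 : Set G) := by
          rw [hN]; simp [Subgroup.coe_iInf]
        rw [hEq]
        exact isOpen_biInter_finset fun i _ => i.isOpen'
      have hNnormal : N.Normal := by
        constructor
        intro n hn g
        simp only [hN, Subgroup.mem_iInf] at hn ⊢
        intro i hi
        exact (i.isNormal').conj_mem n (hn i hi) g
      obtain ⟨g, hg⟩ := key N hNnormal (h N hNopen hNnormal)
      refine ⟨g, Set.mem_univ _, ?_⟩
      simp only [Set.mem_iInter]
      intro i hi
      simp only [hN, Subgroup.mem_iInf] at hg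
      exact hg i hi
    obtain ⟨g, -, hg⟩ := isCompact_univ.inter_iInter_nonempty S hclosed hfin
    simp only [Set.mem_iInter] at hg
    have hone : g * x * g⁻¹ * y⁻¹ = 1 := by
      by_contra hne
      obtain ⟨V, hV, h1V, hVc⟩ := compact_exists_isClopen_in_isOpen
        (isOpen_compl_singleton (x := g * x * g⁻¹ * y⁻¹)) (by simpa using Ne.symm hne)
      obtain ⟨H, hH⟩ := IsTopologicalGroup.exist_openNormalSubgroup_sub_clopen_nhds_of_one hV h1V
      exact hVc (hH (hg H)) rfl
    exact ⟨g, mul_inv_eq_one.1 hone⟩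
end
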